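/- arXiv:2109.03678 — 9 statements merged into one kernel-verified Lean document; each statement's English description precedes it below -/
import Mathlib

section
/- Let A be an m×n matrix with nonnegative entries that is normalized, i.e., max_{i∈[m]} A_{ij} = 1 for every column j ∈ [n]. If x* is a maximizer of f(x) = Σ_{i=1}^n log x_i over the feasible region P = {x ∈ ℝ_{≥0}^n : Ax ≤ 1_m}, then x*_i ≥ 1/n for every i ∈ [n]. -/
open scoped BigOperators

/-- If `A` is a normalized nonnegative matrix and `x*` maximizes
`f(x) = ∑ log xᵢ` over the feasible region `{x > 0 : A x ≤ 1}`, then every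
coordinate of `x*` is at least `1/n`. -/
theorem lower_bound_on_coordinates_of_maximizer {m n : ℕ}
    (A : Matrix (Fin m) (Fin n) ℝ)
    (hA : ∀ i j, 0 ≤ A i j)
    (hnorm : ∀ j, (∀ i, A i j ≤ 1) ∧ ∃ i, A i j = 1)
    (xs : Fin n → ℝ)
    (hxs_pos : ∀ j, 0 < xs j)
    (hxs_feas : ∀ i, A.mulVec xs i ≤ 1)
    (hmax : ∀ x : Fin n → ℝ, (∀ j, 0 < x j) → (∀ i, A.mulVec x i ≤ 1) →
      ∑ j, Real.log (x j) ≤ ∑ j, Real.log (xs j)) :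
    ∀ j, 1 / (n : ℝ) ≤ xs j := by
  intro k
  by_contra hcon
  push_neg at hcon
  have hn : 0 < n := k.pos
  have hn' : (1:ℝ) ≤ (n:ℝ) := by exact_mod_cast hn
  set x : ℝ := xs k with hxdef
  have hx : 0 < x := hxs_pos k
  have hδ : 0 < 1 - (n:ℝ) * x := by
    have h := hcon
    have hn0 : (0:ℝ) < n := by exact_mod_cast hn
    rw [lt_div_iff₀ hn0] at h
    nlinarith
  set δ : ℝ := 1 - (n:ℝ) * x with hδdef
  have hx1 : x < 1 := by nlinarith
  set c : ℝ := ((n:ℝ) - 1) * (1 - x) with hcdef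
  have hc : 0 ≤ c := by
    apply mul_nonneg <;> nlinarith
  have hD : (0:ℝ) < 2*c + 2*δ + 1 := by nlinarith
  set L : ℝ := δ / (2*c + 2*δ + 1) with hLdef
  have hL0 : 0 < L := div_pos hδ hD
  have hLD : L * (2*c + 2*δ + 1) = δ := div_mul_cancel₀ δ hD.ne'
  have hLδ : L < δ := by nlinarith
  have hδ1 : δ < 1 := by nlinarith
  have hL1 : L < 1 := hLδ.trans hδ1
  -- the perturbed point: move a little from `xs` toward the feasible point `e_k`
  set x' : Fin n → ℝ := fun j => (1 - L) * xs j + if j = k then L else 0 with hx'def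
  have hx'pos : ∀ j, 0 < x' j := by
    intro j
    have := hxs_pos j
    by_cases h : j = k <;> simp [hx'def, h] <;> nlinarith
  have hx'feas : ∀ i, A.mulVec x' i ≤ 1 := by
    intro i
    have hterm : ∀ j : Fin n, A i j * x' j
        = (1 - L) * (A i j * xs j) + (if j = k then A i k * L else 0) := by
      intro j
      by_cases h : j = k <;> simp [hx'def, h] <;> ring
    have hsum : A.mulVec x' i = (1 - L) * A.mulVec xs i + A i k * L := by
      show ∑ j, A i j * x' j = (1 - L) * ∑ j, A i j * xs j + A i k * L
      rw [Finset.sum_congr rfl fun j _ => hterm j, Finset.sum_add_distrib,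
        ← Finset.mul_sum, Finset.sum_ite_eq' Finset.univ k]
      simp
    rw [hsum]
    have h1 : A.mulVec xs i ≤ 1 := hxs_feas i
    have h2 : A i k ≤ 1 := (hnorm k).1 i
    have h3 : 0 ≤ A i k := hA i k
    nlinarith
  have hkey := hmax x' hx'pos hx'feas
  -- split the sums over the coordinate `k`
  have hsplit : ∀ (v : Fin n → ℝ), ∑ j, v j = v k + ∑ j ∈ {k}ᶜ, v j := by
    intro v
    rw [← Finset.sum_compl_add_sum {k} v]
    simp [add_comm]
  rw [hsplit, hsplit (fun j => Real.log (xs j))] at hkey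
  have hcompl : ∑ j ∈ ({k}ᶜ : Finset (Fin n)), Real.log (x' j)
      = (n - 1 : ℕ) * Real.log (1 - L) + ∑ j ∈ ({k}ᶜ : Finset (Fin n)), Real.log (xs j) := by
    have h1 : ∀ j ∈ ({k}ᶜ : Finset (Fin n)),
        Real.log (x' j) = Real.log (1 - L) + Real.log (xs j) := by
      intro j hj
      rw [Finset.mem_compl, Finset.mem_singleton] at hj
      rw [hx'def]
      simp only [if_neg hj, add_zero]
      exact Real.log_mul (by intro h; nlinarith) (hxs_pos j).ne'
    rw [Finset.sum_congr rfl h1, Finset.sum_add_distrib, Finset.sum_const]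
    have h2 : ({k}ᶜ : Finset (Fin n)).card = n - 1 := by
      rw [Finset.card_compl]; simp
    rw [h2, nsmul_eq_mul]
  rw [hcompl] at hkey
  have hklog : Real.log (x' k) + (n-1:ℕ) * Real.log (1 - L) ≤ Real.log x := by linarith
  have hxk : x' k = (1 - L) * x + L := by rw [hx'def]; simp [hxdef]
  have hP : 0 < (1 - L) * x + L := by nlinarith
  have hQ : 0 < (1 - L) ^ (n - 1) := pow_pos (by linarith) _
  have hlogmul : Real.log (((1 - L) * x + L) * (1 - L) ^ (n - 1)) ≤ Real.log x := by
    rw [Real.log_mul hP.ne' hQ.ne', Real.log_pow]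
    rw [hxk] at hklog
    exact hklog
  have hle : ((1 - L) * x + L) * (1 - L) ^ (n - 1) ≤ x := by
    calc ((1 - L) * x + L) * (1 - L) ^ (n - 1)
        = Real.exp (Real.log (((1 - L) * x + L) * (1 - L) ^ (n - 1))) :=
          (Real.exp_log (mul_pos hP hQ)).symm
      _ ≤ Real.exp (Real.log x) := Real.exp_le_exp.mpr hlogmul
      _ = x := Real.exp_log hx
  -- Bernoulli's inequality
  have hbern : 1 - ((n:ℝ)-1) * L ≤ (1 - L) ^ (n - 1) := by
    have hb := one_add_mul_le_pow (show (-2:ℝ) ≤ -L by linarith) (n - 1)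
    have hcast : ((n - 1 : ℕ) : ℝ) = (n:ℝ) - 1 := by
      rw [Nat.cast_sub hn]; simp
    rw [hcast] at hb
    have h2 : (1:ℝ) + -L = 1 - L := by ring
    rw [h2] at hb
    linarith
  have hfin : ((1 - L) * x + L) * (1 - ((n:ℝ)-1) * L) ≤ x :=
    (mul_le_mul_of_nonneg_left hbern hP.le).trans hle
  have hexp : ((1 - L) * x + L) * (1 - ((n:ℝ)-1) * L) = x + L * (δ - c * L) := by
    rw [hδdef, hcdef]; ring
  have hLD' : 2*(c*L) + 2*(δ*L) + L = δ := by linear_combination hLD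
  have hδL : 0 < δ*L := mul_pos hδ hL0
  have h1 : c * L < δ := by linarith
  have h2 : 0 < L * (δ - c * L) := mul_pos hL0 (by linarith)
  linarith [hfin, h2, hexp.symm.le.trans hfin]
end

section
/- Let ε ∈ (0, n/2], let A be a normalized nonnegative m×n matrix, set β = ε/(6n log(2mn²/ε)), ω = log(mn/(1−ε/n)), and B = [−ω, 0]^n. Let x_r* be a minimizer of f_r over B and let x_r^ε ∈ B satisfy f_r(x_r^ε) − f_r(x_r*) ≤ ε. Then the point ū = exp(x_r^ε)/(1+ε/n) is feasible, i.e., Aū ≤ 1_m, and satisfies f(x*) − f(ū) ≤ 5ε, where x* is the maximizer of f over P. -/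
open scoped BigOperators

/-- The regularized objective `f_r` for the 1-fair packing problem. -/
noncomputable def fr {m n : ℕ} (A : Matrix (Fin m) (Fin n) ℝ) (β : ℝ)
    (x : Fin n → ℝ) : ℝ :=
  -(∑ j, x j) + (β / (1 + β)) *
    ∑ i, (A.mulVec (fun j => Real.exp (x j)) i) ^ ((1 + β) / β)

private lemma aux_log_one_sub_ge {t : ℝ} (h0 : 0 ≤ t) (h : t ≤ 1/2) :
    -(2*t) ≤ Real.log (1 - t) := by
  have h1 : (0:ℝ) < 1 - t := by linarith
  rw [Real.le_log_iff_exp_le h1]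
  have h2 : 1 + 2*t ≤ Real.exp (2*t) := by
    have := Real.add_one_le_exp (2*t); linarith
  have h3 : Real.exp (-(2*t)) = (Real.exp (2*t))⁻¹ := Real.exp_neg _
  rw [h3]
  rw [inv_le_comm₀ (Real.exp_pos _) h1]
  calc (1-t)⁻¹ ≤ 1 + 2*t := by
        rw [inv_le_iff_one_le_mul₀ h1]
        nlinarith
    _ ≤ Real.exp (2*t) := h2

private lemma aux_log_one_add_ge {t : ℝ} (h0 : 0 ≤ t) (h : t ≤ 1/2) :
    2/3 * t ≤ Real.log (1 + t) := by
  have h1 : (0:ℝ) < 1 + t := by linarith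
  have h2 : Real.log (1+t)⁻¹ ≤ (1+t)⁻¹ - 1 := Real.log_le_sub_one_of_pos (by positivity)
  rw [Real.log_inv] at h2
  have h3 : t/(1+t) ≤ Real.log (1+t) := by
    have : (1+t)⁻¹ - 1 = -(t/(1+t)) := by field_simp; ring
    linarith [h2, this.le]  -- fix below
  have h4 : 2/3*t ≤ t/(1+t) := by
    rw [le_div_iff₀ h1]; nlinarith
  linarith

private lemma aux_bernoulli_contra {a d nn : ℝ} (ha0 : 0 < a) (hd0 : 0 < d)
    (hn1 : 1 ≤ nn) (hdn : nn*d = 1 - nn*a) (ha1 : a ≤ 1)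
    (hchain : ((1-d)*a + d) * (1 - (nn-1)*d) ≤ a) : False := by
  have e : ((1-d)*a + d) * (1 - (nn-1)*d) = a + d*(1-nn*a) - (nn-1)*d^2*(1-a) := by ring
  rw [e, ← hdn] at hchain
  nlinarith [mul_pos hd0 hd0, mul_nonneg (mul_nonneg (by linarith : (0:ℝ) ≤ nn-1)
    (mul_pos hd0 hd0).le) ha0.le]

private lemma aux_exp_small {mR nR ε X L : ℝ} (hm1 : 1 ≤ mR) (hn1 : 1 ≤ nR) (hε0 : 0 < ε)
    (hX : X = 2*mR*nR^2/ε) (hX4 : 4 ≤ X) (hL : L = Real.log X) :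
    mR * Real.exp (-(6*L)) ≤ ε := by
  have hX0 : (0:ℝ) < X := by linarith
  have he : Real.exp (6*L) = X^(6:ℕ) := by
    rw [hL, show (6:ℝ)*Real.log X = ((6:ℕ):ℝ)*Real.log X by norm_num,
      Real.exp_nat_mul, Real.exp_log hX0]
  rw [Real.exp_neg, ← div_eq_mul_inv, div_le_iff₀ (Real.exp_pos _), he]
  have hεX : ε * X = 2*mR*nR^2 := by rw [hX]; field_simp
  have hX1 : (1:ℝ) ≤ X := by linarith
  have h5 : (1:ℝ) ≤ X^5 := one_le_pow₀ hX1
  have h6 : 2*mR*nR^2 * 1 ≤ 2*mR*nR^2 * X^5 :=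
    mul_le_mul_of_nonneg_left h5 (by nlinarith)
  have h7 : ε * X^(6:ℕ) = (ε*X) * X^5 := by ring
  have h8 : mR ≤ 2*mR*nR^2 := by
    have hsq : (1:ℝ) ≤ nR^2 := one_le_pow₀ hn1
    nlinarith
  have h9 : ε * X * X^5 = 2*mR*nR^2 * X^5 := by rw [hεX]
  linarith

private lemma aux_feas_contra {mR nR ε X : ℝ} (hm1 : 1 ≤ mR) (hn1 : 1 ≤ nR)
    (hε0 : 0 < ε) (hεn : ε ≤ nR/2) (hX : X = 2*mR*nR^2/ε)
    (H : ε/(12*nR*X) * X^(4:ℕ) ≤ nR * Real.log nR + 4*ε) : False := by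
  have hn0 : (0:ℝ) < nR := by linarith
  have hεX : ε * X = 2*mR*nR^2 := by rw [hX]; field_simp
  have hX0 : (0:ℝ) < X := by rw [hX]; positivity
  have hlogn : Real.log nR ≤ nR - 1 := Real.log_le_sub_one_of_pos hn0
  have hXn : 4*nR ≤ X := by
    rw [hX, le_div_iff₀ hε0]; nlinarith
  have hH2 : ε * X^3 ≤ 12*nR*(nR*Real.log nR + 4*ε) := by
    have e : ε/(12*nR*X) * X^(4:ℕ) = ε * X^3 / (12*nR) := by field_simp
    rw [e, div_le_iff₀ (by positivity)] at H
    linarith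
  have hsq : 16*nR^2 ≤ X^2 := by nlinarith
  have h3 : 32*nR^4 ≤ ε*X^3 := by
    have e2 : ε*X^3 = (ε*X)*X^2 := by ring
    rw [e2, hεX]
    have q1 : 2*mR*nR^2*(16*nR^2) ≤ 2*mR*nR^2*X^2 :=
      mul_le_mul_of_nonneg_left hsq (by positivity)
    have q2 : (1:ℝ)*nR^4 ≤ mR*nR^4 := mul_le_mul_of_nonneg_right hm1 (by positivity)
    nlinarith
  have p1 : 12*nR^2*Real.log nR ≤ 12*nR^2*(nR-1) := by nlinarith
  have p2 : 48*nR*ε ≤ 24*nR^2 := by nlinarith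
  have p3 : nR^2 ≤ nR^3 := by nlinarith
  have p4 : nR^3 ≤ nR^4 := by nlinarith
  nlinarith

private lemma aux_mulVec_smul {m n : ℕ} (A : Matrix (Fin m) (Fin n) ℝ) (c : ℝ)
    (v : Fin n → ℝ) (i : Fin m) :
    A.mulVec (fun j => c * v j) i = c * A.mulVec v i := by
  simp [Matrix.mulVec, dotProduct, Finset.mul_sum, mul_left_comm]

private lemma aux_mulVec_nonneg {m n : ℕ} {A : Matrix (Fin m) (Fin n) ℝ}
    (hA : ∀ i j, 0 ≤ A i j) {v : Fin n → ℝ} (hv : ∀ j, 0 ≤ v j) (i : Fin m) :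
    0 ≤ A.mulVec v i := by
  simp only [Matrix.mulVec, dotProduct]
  exact Finset.sum_nonneg fun j _ => mul_nonneg (hA i j) (hv j)

set_option maxHeartbeats 1000000 in
/-- An `ε`-minimizer of the regularized problem over the box `B = [-ω,0]^n`
yields, after exponentiating and rescaling, a feasible `5ε`-maximizer of the
original 1-fair packing problem. -/
theorem optimizing_the_smoothened_function_is_enough {m n : ℕ}
    (A : Matrix (Fin m) (Fin n) ℝ) (ε : ℝ)
    (hA : ∀ i j, 0 ≤ A i j)
    (hnorm : ∀ j, (∀ i, A i j ≤ 1) ∧ ∃ i, A i j = 1)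
    (hε0 : 0 < ε) (hεn : ε ≤ n / 2)
    (β ω : ℝ)
    (hβ : β = ε / (6 * n * Real.log (2 * m * n ^ 2 / ε)))
    (hω : ω = Real.log (m * n / (1 - ε / n)))
    (xr xre : Fin n → ℝ)
    (hxr_mem : ∀ j, xr j ∈ Set.Icc (-ω) 0)
    (hxr_min : ∀ x : Fin n → ℝ, (∀ j, x j ∈ Set.Icc (-ω) 0) → fr A β xr ≤ fr A β x)
    (hxre_mem : ∀ j, xre j ∈ Set.Icc (-ω) 0)
    (hxre : fr A β xre - fr A β xr ≤ ε)
    (xs : Fin n → ℝ)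
    (hxs_pos : ∀ j, 0 < xs j)
    (hxs_feas : ∀ i, A.mulVec xs i ≤ 1)
    (hmax : ∀ x : Fin n → ℝ, (∀ j, 0 < x j) → (∀ i, A.mulVec x i ≤ 1) →
      ∑ j, Real.log (x j) ≤ ∑ j, Real.log (xs j)) :
    (∀ i, A.mulVec (fun j => Real.exp (xre j) / (1 + ε / n)) i ≤ 1) ∧
    ∑ j, Real.log (xs j) - ∑ j, Real.log (Real.exp (xre j) / (1 + ε / n)) ≤ 5 * ε := by
  -- basic positivity
  have hn0 : (0:ℝ) < n := by
    rcases Nat.eq_zero_or_pos n with h | h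
    · rw [h] at hεn; simp at hεn; linarith
    · exact_mod_cast h
  have hnpos : 0 < n := by
    by_contra h
    push_neg at h
    interval_cases n
    · simp at hn0
  have hn1 : (1:ℝ) ≤ n := by exact_mod_cast hnpos
  have hm1 : (1:ℝ) ≤ m := by
    obtain ⟨i0, _⟩ := (hnorm ⟨0, hnpos⟩).2
    exact_mod_cast i0.pos
  have hεn' : ε / n ≤ 1/2 := by
    rw [div_le_iff₀ hn0]; linarith
  have hε'0 : 0 < ε / n := by positivity
  set X := 2 * (m:ℝ) * (n:ℝ)^2 / ε with hX
  set L := Real.log X with hL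
  clear_value X
  clear_value L
  have hX4 : 4 ≤ X := by
    rw [hX, le_div_iff₀ hε0]; nlinarith
  have hX0 : 0 < X := by linarith
  have hL1 : 1 ≤ L := by
    rw [hL, Real.le_log_iff_exp_le hX0]
    have := Real.exp_one_lt_d9; linarith
  have hL0 : 0 < L := by linarith
  have hLX : L ≤ X := by
    rw [hL]; exact le_trans (Real.log_le_sub_one_of_pos hX0) (by linarith)
  have hβ0 : 0 < β := by rw [hβ]; positivity
  have hβ1 : β ≤ 1 := by
    rw [hβ, div_le_one (by positivity)]; nlinarith
  have hone_sub : (0:ℝ) < 1 - ε/n := by linarith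
  have homega : Real.exp (-ω) = (1 - ε/n) / ((m:ℝ)*n) := by
    have h2 : (0:ℝ) < (m:ℝ)*n / (1 - ε/n) := by positivity
    rw [hω, Real.exp_neg, Real.exp_log h2, inv_div]
  -- upper bound on the optimal solution
  have hxs_le1 : ∀ j, xs j ≤ 1 := by
    intro j
    obtain ⟨i, hi⟩ := (hnorm j).2
    have h1 := hxs_feas i
    have h2 : A i j * xs j ≤ A.mulVec xs i := by
      simp only [Matrix.mulVec, dotProduct]
      exact Finset.single_le_sum
        (fun k _ => mul_nonneg (hA i k) (hxs_pos k).le) (Finset.mem_univ j)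
    rw [hi, one_mul] at h2; linarith
  -- lower bound on the optimal solution
  have hxs_ge : ∀ j, 1/(n:ℝ) ≤ xs j := by
    intro j
    by_contra hcon
    push_neg at hcon
    set a := xs j with ha
    have ha0 : 0 < a := hxs_pos j
    have ha1 : a ≤ 1 := hxs_le1 j
    have hθ : 0 < 1 - n*a := by
      rw [lt_div_iff₀ hn0] at hcon
      have := mul_comm a (n:ℝ); linarith
    set δ := (1 - (n:ℝ)*a)/n with hδ
    have hδ0 : 0 < δ := by positivity
    have hδn : (n:ℝ)*δ = 1 - n*a := by rw [hδ]; field_simp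
    have hδ1 : δ < 1 := by
      rw [hδ, div_lt_one hn0]
      have := mul_pos hn0 ha0; linarith
    set y := fun k => (1-δ) * xs k + if k = j then δ else 0 with hy
    have hypos : ∀ k, 0 < y k := by
      intro k
      have h1 : 0 < (1-δ) * xs k := mul_pos (by linarith) (hxs_pos k)
      have h2 : (0:ℝ) ≤ if k = j then δ else 0 := by split <;> simp [hδ0.le]
      simp only [hy]; linarith
    have hyfeas : ∀ i, A.mulVec y i ≤ 1 := by
      intro i
      have he : A.mulVec y i = (1-δ) * A.mulVec xs i + A i j * δ := by
        simp only [hy, Matrix.mulVec, dotProduct, mul_add]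
        rw [Finset.sum_add_distrib]
        congr 1
        · rw [Finset.mul_sum]
          exact Finset.sum_congr rfl (fun k _ => by ring)
        · simp [mul_ite, mul_zero]
      rw [he]
      have h1 := hxs_feas i
      have h2 : A i j ≤ 1 := (hnorm j).1 i
      have h4 : (1-δ) * A.mulVec xs i ≤ (1-δ) * 1 :=
        mul_le_mul_of_nonneg_left h1 (by linarith)
      have h5 : A i j * δ ≤ 1 * δ := mul_le_mul_of_nonneg_right h2 hδ0.le
      linarith
    have hopt := hmax y hypos hyfeas
    have hsum : Real.log ((1-δ)*a + δ) + ((n:ℝ) - 1) * Real.log (1-δ) ≤ Real.log a := by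
      have e1 : ∑ k, Real.log (y k)
          = Real.log (y j) + ∑ k ∈ Finset.univ.erase j, Real.log (y k) :=
        (Finset.add_sum_erase _ _ (Finset.mem_univ j)).symm
      have e2 : ∑ k, Real.log (xs k)
          = Real.log (xs j) + ∑ k ∈ Finset.univ.erase j, Real.log (xs k) :=
        (Finset.add_sum_erase _ _ (Finset.mem_univ j)).symm
      have e3 : ∑ k ∈ Finset.univ.erase j, Real.log (y k)
          = ∑ k ∈ Finset.univ.erase j, (Real.log (1-δ) + Real.log (xs k)) := by
        refine Finset.sum_congr rfl (fun k hk => ?_)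
        have hkj : k ≠ j := Finset.ne_of_mem_erase hk
        simp only [hy, if_neg hkj, add_zero]
        exact Real.log_mul (by linarith) (hxs_pos k).ne'
      have e4 : ∑ k ∈ Finset.univ.erase j, (Real.log (1-δ) + Real.log (xs k))
          = ((n:ℝ)-1) * Real.log (1-δ) + ∑ k ∈ Finset.univ.erase j, Real.log (xs k) := by
        rw [Finset.sum_add_distrib, Finset.sum_const,
          Finset.card_erase_of_mem (Finset.mem_univ j), Finset.card_univ, Fintype.card_fin,
          nsmul_eq_mul]
        congr 2
        push_cast [Nat.cast_sub hnpos]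
        ring
      have e5 : y j = (1-δ)*a + δ := by simp [hy]; exact Or.inl ha.symm
      rw [e1, e2, e3, e4, e5] at hopt
      linarith
    have hkey : ((1-δ)*a + δ) * (1-δ)^(n-1) ≤ a := by
      have h1 : 0 < (1-δ)*a + δ := by
        have := mul_pos (show (0:ℝ) < 1-δ by linarith) ha0; linarith
      have h2 : 0 < (1-δ)^(n-1) := pow_pos (by linarith) _
      have e6 : ((n:ℝ)-1) * Real.log (1-δ) = Real.log ((1-δ)^(n-1)) := by
        rw [Real.log_pow]
        push_cast [Nat.cast_sub hnpos]
        ring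
      rw [e6, ← Real.log_mul h1.ne' h2.ne'] at hsum
      exact (Real.log_le_log_iff (by positivity) ha0).mp hsum
    have hb : 1 - ((n:ℝ)-1)*δ ≤ (1-δ)^(n-1) := by
      have hber := one_add_mul_le_pow (a := -δ) (by linarith) (n-1)
      have : ((n-1 : ℕ):ℝ) = (n:ℝ)-1 := by push_cast [Nat.cast_sub hnpos]; ring
      rw [this] at hber
      calc 1 - ((n:ℝ)-1)*δ = 1 + ((n:ℝ)-1)*(-δ) := by ring
        _ ≤ (1 + -δ)^(n-1) := hber
        _ = (1-δ)^(n-1) := by ring_nf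
    have hchain : ((1-δ)*a + δ) * (1 - ((n:ℝ)-1)*δ) ≤ a := by
      calc ((1-δ)*a + δ) * (1 - ((n:ℝ)-1)*δ)
          ≤ ((1-δ)*a + δ) * (1-δ)^(n-1) := by
            apply mul_le_mul_of_nonneg_left hb
            have := mul_pos (show (0:ℝ) < 1-δ by linarith) ha0; linarith
        _ ≤ a := hkey
    exact aux_bernoulli_contra ha0 hδ0 hn1 hδn ha1 hchain
  -- the comparison point
  have hxh_pos : ∀ j, 0 < (1-ε/(n:ℝ)) * xs j := fun j => mul_pos hone_sub (hxs_pos j)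
  set xh := fun j => Real.log ((1 - ε/(n:ℝ)) * xs j) with hxh
  have hxh_mem : ∀ j, xh j ∈ Set.Icc (-ω) 0 := by
    intro j
    constructor
    · rw [hxh, Real.le_log_iff_exp_le (hxh_pos j), homega]
      have h1 : (1:ℝ)/((m:ℝ)*n) ≤ 1/(n:ℝ) := by
        apply one_div_le_one_div_of_le hn0
        have := mul_le_mul_of_nonneg_right hm1 hn0.le
        linarith
      have h2 : (1:ℝ)/((m:ℝ)*n) ≤ xs j := le_trans h1 (hxs_ge j)
      calc (1-ε/(n:ℝ))/((m:ℝ)*n) = (1-ε/(n:ℝ)) * (1/((m:ℝ)*n)) := by ring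
        _ ≤ (1-ε/(n:ℝ)) * xs j := mul_le_mul_of_nonneg_left h2 hone_sub.le
    · apply Real.log_nonpos (hxh_pos j).le
      exact mul_le_one₀ (by linarith) (hxs_pos j).le (hxs_le1 j)
  have hq1 : 1/β ≤ (1+β)/β := by gcongr; linarith
  have hq0 : (0:ℝ) < (1+β)/β := by positivity
  have hβinv : 1/β = 6*(n:ℝ)*L/ε := by rw [hβ, one_div_div]
  have hpen_xh : ∀ i, (A.mulVec (fun j => Real.exp (xh j)) i) ^ ((1+β)/β)
      ≤ Real.exp (-(6*L)) := by
    intro i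
    have hexp : (fun j => Real.exp (xh j)) = fun j => (1-ε/(n:ℝ)) * xs j := by
      funext j; exact Real.exp_log (hxh_pos j)
    rw [hexp, aux_mulVec_smul]
    have h2 : (1-ε/(n:ℝ)) * A.mulVec xs i ≤ 1 - ε/(n:ℝ) := by
      have := mul_le_mul_of_nonneg_left (hxs_feas i) hone_sub.le
      linarith [this]
    have h3 : 0 ≤ (1-ε/(n:ℝ)) * A.mulVec xs i :=
      mul_nonneg hone_sub.le (aux_mulVec_nonneg hA (fun k => (hxs_pos k).le) i)
    calc ((1-ε/(n:ℝ)) * A.mulVec xs i) ^ ((1+β)/β)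
        ≤ (1-ε/(n:ℝ)) ^ ((1+β)/β) := Real.rpow_le_rpow h3 h2 hq0.le
      _ ≤ (1-ε/(n:ℝ)) ^ (1/β) :=
          Real.rpow_le_rpow_of_exponent_ge hone_sub (by linarith) hq1
      _ = Real.exp (Real.log (1-ε/(n:ℝ)) * (1/β)) := Real.rpow_def_of_pos hone_sub _
      _ ≤ Real.exp (-(6*L)) := by
          rw [Real.exp_le_exp, hβinv]
          have hlog : Real.log (1-ε/(n:ℝ)) ≤ -(ε/(n:ℝ)) := by
            have := Real.log_le_sub_one_of_pos hone_sub; linarith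
          calc Real.log (1-ε/(n:ℝ)) * (6*(n:ℝ)*L/ε)
              ≤ (-(ε/(n:ℝ))) * (6*(n:ℝ)*L/ε) :=
                mul_le_mul_of_nonneg_right hlog (by positivity)
            _ = -(6*L) := by field_simp
  have hpen_sum_xh : ∑ i, (A.mulVec (fun j => Real.exp (xh j)) i) ^ ((1+β)/β) ≤ ε := by
    calc ∑ i, (A.mulVec (fun j => Real.exp (xh j)) i) ^ ((1+β)/β)
        ≤ ∑ _i : Fin m, Real.exp (-(6*L)) := Finset.sum_le_sum fun i _ => hpen_xh i
      _ = m * Real.exp (-(6*L)) := by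
          rw [Finset.sum_const, Finset.card_univ, Fintype.card_fin, nsmul_eq_mul]
      _ ≤ ε := aux_exp_small hm1 hn1 hε0 hX hX4 hL
  have hsum_xh : -∑ j, xh j ≤ -∑ j, Real.log (xs j) + 2*ε := by
    have e : ∑ j, xh j = (n:ℝ) * Real.log (1-ε/(n:ℝ)) + ∑ j, Real.log (xs j) := by
      simp only [hxh]
      rw [Finset.sum_congr rfl (fun j _ => Real.log_mul hone_sub.ne' (hxs_pos j).ne'),
        Finset.sum_add_distrib, Finset.sum_const, Finset.card_univ, Fintype.card_fin,
        nsmul_eq_mul]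
    have hlog2 : -(2*(ε/(n:ℝ))) ≤ Real.log (1-ε/(n:ℝ)) := aux_log_one_sub_ge hε'0.le hεn'
    have h1 : -(2*ε) ≤ (n:ℝ) * Real.log (1-ε/(n:ℝ)) := by
      have hmm := mul_le_mul_of_nonneg_left hlog2 hn0.le
      have e2 : (n:ℝ) * (-(2*(ε/(n:ℝ)))) = -(2*ε) := by field_simp
      linarith
    rw [e]; linarith
  have hc1 : β/(1+β) ≤ 1 := by
    rw [div_le_one (by linarith)]; linarith
  have hc0 : (0:ℝ) ≤ β/(1+β) := by positivity
  have hfr_xh : fr A β xh ≤ -∑ j, Real.log (xs j) + 3*ε := by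
    have hP0 : 0 ≤ ∑ i, (A.mulVec (fun j => Real.exp (xh j)) i) ^ ((1+β)/β) :=
      Finset.sum_nonneg fun i _ =>
        Real.rpow_nonneg (aux_mulVec_nonneg hA (fun k => (Real.exp_pos _).le) i) _
    have h2 : β/(1+β) * ∑ i, (A.mulVec (fun j => Real.exp (xh j)) i) ^ ((1+β)/β) ≤ ε := by
      calc β/(1+β) * ∑ i, (A.mulVec (fun j => Real.exp (xh j)) i) ^ ((1+β)/β)
          ≤ 1 * ε := mul_le_mul hc1 hpen_sum_xh hP0 zero_le_one
        _ = ε := one_mul ε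
    unfold fr
    linarith
  have hfr_xre : fr A β xre ≤ -∑ j, Real.log (xs j) + 4*ε := by
    have := hxr_min xh hxh_mem
    linarith
  have hxre_nonpos : ∑ j, xre j ≤ 0 := Finset.sum_nonpos fun j _ => (hxre_mem j).2
  have hpenre0 : ∀ i, (0:ℝ) ≤ (A.mulVec (fun j => Real.exp (xre j)) i) ^ ((1+β)/β) :=
    fun i => Real.rpow_nonneg (aux_mulVec_nonneg hA (fun k => (Real.exp_pos _).le) i) _
  have hfeas : ∀ i, A.mulVec (fun j => Real.exp (xre j)) i ≤ 1 + ε/(n:ℝ) := by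
    intro i
    by_contra hcon
    push_neg at hcon
    have ht1 : 1 + ε/(n:ℝ) ≤ A.mulVec (fun j => Real.exp (xre j)) i := hcon.le
    have ht0 : (1:ℝ) ≤ A.mulVec (fun j => Real.exp (xre j)) i := by linarith
    have htq : Real.exp (4*L) ≤ (A.mulVec (fun j => Real.exp (xre j)) i) ^ ((1+β)/β) := by
      have h1 : (1 + ε/(n:ℝ)) ^ (1/β) ≤ (A.mulVec (fun j => Real.exp (xre j)) i) ^ (1/β) :=
        Real.rpow_le_rpow (by positivity) ht1 (by positivity)
      have h2 : (A.mulVec (fun j => Real.exp (xre j)) i) ^ (1/β)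
          ≤ (A.mulVec (fun j => Real.exp (xre j)) i) ^ ((1+β)/β) :=
        Real.rpow_le_rpow_of_exponent_le ht0 hq1
      have h3 : Real.exp (4*L) ≤ (1 + ε/(n:ℝ)) ^ (1/β) := by
        rw [Real.rpow_def_of_pos (by positivity), Real.exp_le_exp, hβinv]
        have hlog := aux_log_one_add_ge hε'0.le hεn'
        calc (4:ℝ)*L = (2/3*(ε/(n:ℝ))) * (6*(n:ℝ)*L/ε) := by field_simp; ring
          _ ≤ Real.log (1+ε/(n:ℝ)) * (6*(n:ℝ)*L/ε) :=
              mul_le_mul_of_nonneg_right hlog (by positivity)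
      exact le_trans h3 (le_trans h1 h2)
    have hsingle : (A.mulVec (fun j => Real.exp (xre j)) i) ^ ((1+β)/β)
        ≤ ∑ i', (A.mulVec (fun j => Real.exp (xre j)) i') ^ ((1+β)/β) :=
      Finset.single_le_sum (fun i' _ => hpenre0 i') (Finset.mem_univ i)
    have hfrlow : β/(1+β) * Real.exp (4*L) ≤ fr A β xre := by
      have h4 : β/(1+β) * Real.exp (4*L)
          ≤ β/(1+β) * ∑ i', (A.mulVec (fun j => Real.exp (xre j)) i') ^ ((1+β)/β) :=
        mul_le_mul_of_nonneg_left (le_trans htq hsingle) hc0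
      unfold fr
      linarith
    have hlogxs : -∑ j, Real.log (xs j) ≤ (n:ℝ) * Real.log n := by
      have h5 : ∀ j, -Real.log (n:ℝ) ≤ Real.log (xs j) := by
        intro j
        rw [← Real.log_inv]
        apply Real.log_le_log (by positivity)
        rw [inv_eq_one_div]; exact hxs_ge j
      have h6 : ∑ _j : Fin n, (-Real.log (n:ℝ)) ≤ ∑ j, Real.log (xs j) :=
        Finset.sum_le_sum fun j _ => h5 j
      rw [Finset.sum_const, Finset.card_univ, Fintype.card_fin, nsmul_eq_mul] at h6
      linarith
    have hβ2 : ε/(12*(n:ℝ)*X) ≤ β/(1+β) := by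
      have hβhalf : β/2 ≤ β/(1+β) := by
        rw [div_le_div_iff₀ (by norm_num) (by linarith)]
        nlinarith
      have hββ : ε/(12*(n:ℝ)*X) ≤ β/2 := by
        rw [hβ, show ε/(6*(n:ℝ)*L)/2 = ε/(12*(n:ℝ)*L) by ring]
        gcongr
      linarith
    have H : ε/(12*(n:ℝ)*X) * Real.exp (4*L) ≤ (n:ℝ)*Real.log n + 4*ε := by
      have h8 : ε/(12*(n:ℝ)*X) * Real.exp (4*L) ≤ β/(1+β) * Real.exp (4*L) :=
        mul_le_mul_of_nonneg_right hβ2 (Real.exp_pos _).le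
      linarith
    have hXe : Real.exp (4*L) = X^(4:ℕ) := by
      rw [hL, show (4:ℝ)*Real.log X = ((4:ℕ):ℝ)*Real.log X by norm_num,
        Real.exp_nat_mul, Real.exp_log hX0]
    rw [hXe] at H
    exact aux_feas_contra hm1 hn1 hε0 hεn hX H
  constructor
  · intro i
    have e : A.mulVec (fun j => Real.exp (xre j) / (1+ε/(n:ℝ))) i
        = (1+ε/(n:ℝ))⁻¹ * A.mulVec (fun j => Real.exp (xre j)) i := by
      have e0 : (fun j => Real.exp (xre j) / (1+ε/(n:ℝ)))
          = fun j => (1+ε/(n:ℝ))⁻¹ * Real.exp (xre j) := by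
        funext j; ring
      rw [e0, aux_mulVec_smul]
    rw [e, inv_mul_le_iff₀ (by positivity), mul_one]
    exact hfeas i
  · have h1 : -∑ j, xre j ≤ fr A β xre := by
      have h2 : 0 ≤ β/(1+β) * ∑ i, (A.mulVec (fun j => Real.exp (xre j)) i) ^ ((1+β)/β) :=
        mul_nonneg hc0 (Finset.sum_nonneg fun i _ => hpenre0 i)
      unfold fr
      linarith
    have e1 : ∀ j, Real.log (Real.exp (xre j)/(1+ε/(n:ℝ)))
        = xre j - Real.log (1+ε/(n:ℝ)) := by
      intro j
      rw [Real.log_div (Real.exp_ne_zero _) (by positivity), Real.log_exp]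
    have e : ∑ j, Real.log (Real.exp (xre j)/(1+ε/(n:ℝ)))
        = ∑ j, xre j - (n:ℝ)*Real.log (1+ε/(n:ℝ)) := by
      rw [Finset.sum_congr rfl fun j _ => e1 j, Finset.sum_sub_distrib, Finset.sum_const,
        Finset.card_univ, Fintype.card_fin, nsmul_eq_mul]
    have hlog3 : Real.log (1+ε/(n:ℝ)) ≤ ε/(n:ℝ) := by
      have := Real.log_le_sub_one_of_pos (show (0:ℝ) < 1+ε/(n:ℝ) by positivity)
      linarith
    have hne : (n:ℝ) * (ε/(n:ℝ)) = ε := by field_simp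
    have h7 : (n:ℝ) * Real.log (1+ε/(n:ℝ)) ≤ ε := by
      have := mul_le_mul_of_nonneg_left hlog3 hn0.le
      linarith
    rw [e]
    linarith
end

section
/- Let X ⊆ ℝ^n be a closed convex set, ψ : X → ℝ a map that is 1-strongly convex with respect to a norm ‖·‖, with Bregman divergence V_y(x) = ψ(x) − ψ(y) − ⟨∇ψ(y), x−y⟩, and let ‖·‖_* be the dual norm. Let ℓ ∈ ℝ^n be an arbitrary loss vector, η > 0, z^{(k−1)} ∈ X, and z^{(k)} = argmin_{z∈X}{ V_{z^{(k−1)}}(z) + η⟨ℓ, z⟩ }. Then for all u ∈ X: (a) η⟨ℓ, z^{(k−1)} − u⟩ ≤ (η²/2)‖ℓ‖_*² + V_{z^{(k−1)}}(u) − V_{z^{(k)}}(u); and (b) η⟨ℓ, z^{(k−1)} − u⟩ ≤ η⟨ℓ, z^{(k−1)} − z^{(k)}⟩ + V_{z^{(k−1)}}(u) − V_{z^{(k)}}(u). -/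
open scoped BigOperators RealInnerProductSpace

/-- Mirror descent lemma: for a 1-strongly convex (w.r.t. an arbitrary norm `N`
with dual norm `Nd`) regularizer `ψ` with Bregman divergence `V`, the mirror
descent step `z1 = argmin_{z ∈ X} { V_{z0}(z) + η⟨ℓ, z⟩ }` satisfies both the
classical regret bound (a) and the non-standard bound (b). -/
theorem mirror_descent_lemma {n : ℕ}
    (X : Set (EuclideanSpace ℝ (Fin n)))
    (hXclosed : IsClosed X) (hXconv : Convex ℝ X)
    (N Nd : EuclideanSpace ℝ (Fin n) → ℝ)
    -- `N` is a norm
    (hN_nonneg : ∀ v, 0 ≤ N v)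
    (hN_smul : ∀ (a : ℝ) v, N (a • v) = |a| * N v)
    (hN_add : ∀ v w, N (v + w) ≤ N v + N w)
    (hN_def : ∀ v, N v = 0 → v = 0)
    -- `Nd` dominates the dual norm pairing
    (hNd_nonneg : ∀ v, 0 ≤ Nd v)
    (hNd : ∀ v w, ⟪v, w⟫ ≤ Nd v * N w)
    (ψ : EuclideanSpace ℝ (Fin n) → ℝ)
    (gψ : EuclideanSpace ℝ (Fin n) → EuclideanSpace ℝ (Fin n))
    (hgrad : ∀ x ∈ X, HasGradientAt ψ (gψ x) x)
    -- `ψ` is 1-strongly convex on `X` with respect to `N`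
    (hstrong : ∀ x ∈ X, ∀ y ∈ X, ψ y + ⟪gψ y, x - y⟫ + (1 / 2) * (N (x - y)) ^ 2 ≤ ψ x)
    (V : EuclideanSpace ℝ (Fin n) → EuclideanSpace ℝ (Fin n) → ℝ)
    (hV : ∀ y x, V y x = ψ x - ψ y - ⟪gψ y, x - y⟫)
    (ℓ : EuclideanSpace ℝ (Fin n)) (η : ℝ) (hη : 0 < η)
    (z0 z1 : EuclideanSpace ℝ (Fin n)) (hz0 : z0 ∈ X) (hz1 : z1 ∈ X)
    (hmin : ∀ z ∈ X, V z0 z1 + η * ⟪ℓ, z1⟫ ≤ V z0 z + η * ⟪ℓ, z⟫) :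
    ∀ u ∈ X,
      (η * ⟪ℓ, z0 - u⟫ ≤ η ^ 2 / 2 * (Nd ℓ) ^ 2 + V z0 u - V z1 u) ∧
      (η * ⟪ℓ, z0 - u⟫ ≤ η * ⟪ℓ, z0 - z1⟫ + V z0 u - V z1 u) := by
  intro u hu
  -- The objective function
  set F : EuclideanSpace ℝ (Fin n) → ℝ :=
    fun z => ψ z - ψ z0 - (⟪gψ z0, z⟫ - ⟪gψ z0, z0⟫) + η * ⟪ℓ, z⟫ with hF
  have hFeq : ∀ z, F z = V z0 z + η * ⟪ℓ, z⟫ := by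
    intro z; simp [hF, hV, inner_sub_right]
  -- z1 minimizes F on X
  have hminF : IsMinOn F X z1 := by
    intro z hz
    simp only [Set.mem_setOf_eq, hFeq]
    exact hmin z hz
  -- derivative of F at z1
  have hψ' : HasFDerivAt ψ (InnerProductSpace.toDual ℝ _ (gψ z1) :
      EuclideanSpace ℝ (Fin n) →L[ℝ] ℝ) z1 :=
    hasGradientAt_iff_hasFDerivAt.mp (hgrad z1 hz1)
  have hF' : HasFDerivAt F
      (((InnerProductSpace.toDual ℝ _ (gψ z1) : EuclideanSpace ℝ (Fin n) →L[ℝ] ℝ)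
        - innerSL ℝ (gψ z0)) + η • innerSL ℝ ℓ) z1 := by
    have h1 : HasFDerivAt (fun z : EuclideanSpace ℝ (Fin n) =>
        ψ z - ψ z0 - (⟪gψ z0, z⟫ - ⟪gψ z0, z0⟫))
        ((InnerProductSpace.toDual ℝ _ (gψ z1) : EuclideanSpace ℝ (Fin n) →L[ℝ] ℝ)
          - innerSL ℝ (gψ z0)) z1 :=
      (hψ'.sub_const (ψ z0)).sub (((innerSL ℝ (gψ z0)).hasFDerivAt).sub_const ⟪gψ z0, z0⟫)
    have h2 : HasFDerivAt (fun z : EuclideanSpace ℝ (Fin n) => η * ⟪ℓ, z⟫)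
        (η • innerSL ℝ ℓ) z1 := ((innerSL ℝ ℓ).hasFDerivAt).const_smul η
    exact h1.add h2
  -- first-order optimality
  have hopt : (0:ℝ) ≤ ⟪gψ z1, u - z1⟫ - ⟪gψ z0, u - z1⟫ + η * ⟪ℓ, u - z1⟫ := by
    have hcone : u - z1 ∈ posTangentConeAt X z1 :=
      sub_mem_posTangentConeAt_of_segment_subset (hXconv.segment_subset hz1 hu)
    have := hminF.localize.hasFDerivWithinAt_nonneg hF'.hasFDerivWithinAt hcone
    simpa [InnerProductSpace.toDual_apply_apply, innerSL_apply_apply, mul_comm] using this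
  -- three-point identity
  have hthree : V z0 u - V z1 u - V z0 z1 = ⟪gψ z1, u - z1⟫ - ⟪gψ z0, u - z1⟫ := by
    simp only [hV, inner_sub_right]; ring
  have key : η * ⟪ℓ, z1 - u⟫ ≤ V z0 u - V z1 u - V z0 z1 := by
    rw [hthree]
    have : ⟪ℓ, z1 - u⟫ = -⟪ℓ, u - z1⟫ := by
      rw [← inner_neg_right]; congr 1; abel
    rw [this]; nlinarith [hopt]
  -- V z0 z1 ≥ ½ N(z1 - z0)²
  have hVz1 : (1/2) * (N (z1 - z0))^2 ≤ V z0 z1 := by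
    have := hstrong z1 hz1 z0 hz0
    rw [hV]; linarith
  have hVnn : 0 ≤ V z0 z1 := le_trans (by positivity) hVz1
  have hsplit : ⟪ℓ, z0 - u⟫ = ⟪ℓ, z0 - z1⟫ + ⟪ℓ, z1 - u⟫ := by
    rw [← inner_add_right]; congr 1; abel
  constructor
  · -- part (a)
    have hb : η * ⟪ℓ, z0 - z1⟫ ≤ η * (Nd ℓ * N (z0 - z1)) := by
      have := hNd ℓ (z0 - z1)
      nlinarith
    have hNsym : N (z0 - z1) = N (z1 - z0) := by
      have : z0 - z1 = (-1 : ℝ) • (z1 - z0) := by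
        simp [neg_smul, one_smul]
      rw [this, hN_smul]; simp
    have hamgm : η * (Nd ℓ * N (z0 - z1)) ≤ η^2/2 * (Nd ℓ)^2 + (1/2) * (N (z0 - z1))^2 := by
      nlinarith [sq_nonneg (η * Nd ℓ - N (z0 - z1))]
    have : η * ⟪ℓ, z0 - z1⟫ ≤ η^2/2 * (Nd ℓ)^2 + V z0 z1 := by
      calc η * ⟪ℓ, z0 - z1⟫ ≤ η * (Nd ℓ * N (z0 - z1)) := hb
        _ ≤ η^2/2 * (Nd ℓ)^2 + (1/2) * (N (z0 - z1))^2 := hamgm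
        _ ≤ η^2/2 * (Nd ℓ)^2 + V z0 z1 := by rw [hNsym] at *; linarith
    have := key
    rw [hsplit]
    linarith
  · -- part (b)
    rw [hsplit]
    linarith [key, hVnn]
end

section
/- Let A be an m×n matrix with nonnegative entries, β > 0, and x ∈ ℝ^n. Let c ∈ [−1,1]^n and define Δ ∈ ℝ^n by Δ_j = −(c_j β/(4(1+β))) · ∇̄_j f_r(x), where ∇̄_j f_r(x) = min{1, ∇_j f_r(x)} is the truncated gradient. Then f_r(x+Δ) − f_r(x) ≤ Σ_{j=1}^n (1 − c_j/2) Δ_j ∇_j f_r(x). -/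
open scoped BigOperators

lemma exp_quarter_le : Real.exp ((4:ℝ)⁻¹) ≤ 4/3 := by
  have h4 : (Real.exp ((4:ℝ)⁻¹)) ^ (4:ℕ) = Real.exp 1 := by
    rw [← Real.exp_nat_mul]; norm_num
  have he : Real.exp 1 < 2.7182818286 := Real.exp_one_lt_d9
  have : (Real.exp ((4:ℝ)⁻¹)) ^ (4:ℕ) ≤ (4/3:ℝ) ^ (4:ℕ) := by
    rw [h4]; nlinarith
  exact le_of_pow_le_pow_left₀ (by norm_num) (by norm_num) this

lemma exp_quad {t : ℝ} (h : |t| ≤ 1) : |Real.exp t - (1 + t)| ≤ (3/4) * t^2 := by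
  have := Real.exp_bound h (n := 2) (by norm_num)
  simp [Finset.sum_range_succ] at this
  linarith [this]

lemma exp_le_quad {t : ℝ} (h : |t| ≤ 1) : Real.exp t ≤ 1 + t + (3/4) * t^2 := by
  have := abs_le.1 (exp_quad h)
  linarith [this.2]

lemma exp_sub_one_sq {t : ℝ} (h : |t| ≤ 1/4) : (Real.exp t - 1)^2 ≤ (361/256) * t^2 := by
  have h1 : |t| ≤ 1 := by linarith [abs_nonneg t]
  have h2 := abs_le.1 (exp_quad h1)
  have ht2 : t^2 ≤ (1/4) * |t| := by
    have : t^2 = |t| * |t| := (abs_mul_abs_self t).symm ▸ (sq t)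
    nlinarith [abs_nonneg t]
  have hu : Real.exp t - 1 ≤ (19/16) * |t| := by
    have : t ≤ |t| := le_abs_self t
    nlinarith [h2.2]
  have hl : -((19/16) * |t|) ≤ Real.exp t - 1 := by
    have : -|t| ≤ t := neg_abs_le t
    nlinarith [h2.1]
  have := abs_le.2 ⟨hl, hu⟩
  calc (Real.exp t - 1)^2 = |Real.exp t - 1|^2 := (sq_abs _).symm
    _ ≤ ((19/16) * |t|)^2 := by
        apply pow_le_pow_left₀ (abs_nonneg _) this
    _ = (361/256) * |t|^2 := by ring
    _ = (361/256) * t^2 := by rw [sq_abs]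

set_option maxHeartbeats 1000000 in
/-- slope bound for rpow on a multiplicative window around `z`. -/
lemma rpow_slope_bound {q z u : ℝ} (hq : 0 < q) (hz : 0 < z) (hu : 0 < u)
    (hul : z * Real.exp (-(4*(1+q))⁻¹) ≤ u) (huu : u ≤ z * Real.exp ((4*(1+q))⁻¹)) :
    |u ^ q - z ^ q| ≤ (4/3) * q * z ^ (q-1) * |u - z| := by
  have hκq : (4*(1+q))⁻¹ * (q-1) ≤ (4:ℝ)⁻¹ ∧ (4*(1+q))⁻¹ * (1-q) ≤ (4:ℝ)⁻¹ := by
    constructor <;>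
    · rw [inv_mul_le_iff₀ (by positivity)]
      nlinarith
  have hz1 : z ^ (q-1) = z ^ q / z := Real.rpow_sub_one hz.ne' q
  have hzq : (0:ℝ) < z ^ q := Real.rpow_pos_of_pos hz q
  have hzq1 : (0:ℝ) < z ^ (q-1) := Real.rpow_pos_of_pos hz (q-1)
  have e14 : Real.exp ((4:ℝ)⁻¹) ≤ 4/3 := exp_quarter_le
  rcases le_total z u with hzu | huz
  · -- z ≤ u : u^q - z^q ≥ 0
    have hmono : z ^ q ≤ u ^ q := Real.rpow_le_rpow hz.le hzu hq.le
    rw [abs_of_nonneg (by linarith), abs_of_nonneg (by linarith)]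
    rcases le_total q 1 with hq1 | hq1
    · -- q ≤ 1 : Bernoulli upper
      have hs : (-1:ℝ) ≤ u/z - 1 := by
        have : 0 < u/z := div_pos hu hz
        linarith
      have hber := rpow_one_add_le_one_add_mul_self hs hq.le hq1
      have h1 : (1 + (u/z - 1)) = u/z := by ring
      rw [h1] at hber
      have hdiv : (u/z) ^ q = u ^ q / z ^ q := Real.div_rpow hu.le hz.le q
      rw [hdiv, div_le_iff₀ hzq] at hber
      have h3 : (1 + q * (u/z - 1)) * z ^ q = z ^ q + q * (z^q/z) * (u - z) := by
        field_simp
      rw [h3] at hber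
      have : u ^ q - z ^ q ≤ q * z ^ (q-1) * (u - z) := by rw [hz1]; linarith
      nlinarith [mul_nonneg (mul_nonneg hq.le hzq1.le) (sub_nonneg.2 hzu)]
    · -- 1 ≤ q : convexity via Bernoulli lower at u
      have hs : (-1:ℝ) ≤ z/u - 1 := by
        have : 0 < z/u := div_pos hz hu
        linarith
      have hber := one_add_mul_self_le_rpow_one_add hs hq1
      have h1 : (1 + (z/u - 1)) = z/u := by ring
      rw [h1] at hber
      have huq : (0:ℝ) < u ^ q := Real.rpow_pos_of_pos hu q
      have hdiv : (z/u) ^ q = z ^ q / u ^ q := Real.div_rpow hz.le hu.le q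
      rw [hdiv] at hber
      -- z^q/u^q ≥ 1 + q(z-u)/u  ⟹ u^q - z^q ≤ q u^{q-1} (u-z)
      have hu1 : u ^ (q-1) = u ^ q / u := Real.rpow_sub_one hu.ne' q
      have key : u ^ q - z ^ q ≤ q * u ^ (q-1) * (u - z) := by
        rw [hu1]
        have h2 : (1 + q * (z/u - 1)) * u ^ q ≤ z ^ q := by
          rw [← le_div_iff₀ huq]; exact hber
        have h3 : (1 + q * (z/u - 1)) * u ^ q = u ^ q + q * (u^q/u) * (z - u) := by
          field_simp
        rw [h3] at h2
        linarith
      -- u^{q-1} ≤ (4/3) z^{q-1}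
      have hbound : u ^ (q-1) ≤ (4/3) * z ^ (q-1) := by
        have h4 : u ^ (q-1) ≤ (z * Real.exp ((4*(1+q))⁻¹)) ^ (q-1) :=
          Real.rpow_le_rpow hu.le huu (by linarith)
        have h5 : (z * Real.exp ((4*(1+q))⁻¹)) ^ (q-1)
            = z ^ (q-1) * Real.exp ((4*(1+q))⁻¹ * (q-1)) := by
          rw [Real.mul_rpow hz.le (Real.exp_pos _).le, ← Real.exp_mul]
        have h6 : Real.exp ((4*(1+q))⁻¹ * (q-1)) ≤ 4/3 :=
          le_trans (Real.exp_le_exp.2 hκq.1) e14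
        calc u ^ (q-1) ≤ z ^ (q-1) * Real.exp ((4*(1+q))⁻¹ * (q-1)) := by rw [← h5]; exact h4
          _ ≤ z ^ (q-1) * (4/3) := by nlinarith
          _ = (4/3) * z ^ (q-1) := by ring
      calc u ^ q - z ^ q ≤ q * u ^ (q-1) * (u - z) := key
        _ ≤ q * ((4/3) * z ^ (q-1)) * (u - z) := by
            apply mul_le_mul_of_nonneg_right _ (by linarith)
            exact mul_le_mul_of_nonneg_left hbound hq.le
        _ = (4/3) * q * z ^ (q-1) * (u - z) := by ring
  · -- u ≤ z
    have hmono : u ^ q ≤ z ^ q := Real.rpow_le_rpow hu.le huz hq.le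
    rw [abs_of_nonpos (by linarith), abs_of_nonpos (by linarith), neg_sub, neg_sub]
    rcases le_total q 1 with hq1 | hq1
    · -- q ≤ 1 : concavity at u : z^q ≤ u^q + q u^{q-1}(z-u)
      have hs : (-1:ℝ) ≤ z/u - 1 := by
        have : 0 < z/u := div_pos hz hu
        linarith
      have hber := rpow_one_add_le_one_add_mul_self hs hq.le hq1
      have h1 : (1 + (z/u - 1)) = z/u := by ring
      rw [h1] at hber
      have huq : (0:ℝ) < u ^ q := Real.rpow_pos_of_pos hu q
      have hdiv : (z/u) ^ q = z ^ q / u ^ q := Real.div_rpow hz.le hu.le q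
      rw [hdiv, div_le_iff₀ huq] at hber
      have hu1 : u ^ (q-1) = u ^ q / u := Real.rpow_sub_one hu.ne' q
      have key : z ^ q - u ^ q ≤ q * u ^ (q-1) * (z - u) := by
        rw [hu1]
        have h3 : (1 + q * (z/u - 1)) * u ^ q = u ^ q + q * (u^q/u) * (z - u) := by
          field_simp
        rw [h3] at hber
        linarith
      have hbound : u ^ (q-1) ≤ (4/3) * z ^ (q-1) := by
        rcases le_total q 1 with _ | hq1' 
        · -- q - 1 ≤ 0, u ≥ z e^{-κ}
          have h4 : u ^ (q-1) ≤ (z * Real.exp (-(4*(1+q))⁻¹)) ^ (q-1) := by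
            apply Real.rpow_le_rpow_of_nonpos (by positivity) hul (by linarith)
          have h5 : (z * Real.exp (-(4*(1+q))⁻¹)) ^ (q-1)
              = z ^ (q-1) * Real.exp (-(4*(1+q))⁻¹ * (q-1)) := by
            rw [Real.mul_rpow hz.le (Real.exp_pos _).le, ← Real.exp_mul]
          have h6 : Real.exp (-(4*(1+q))⁻¹ * (q-1)) ≤ 4/3 := by
            refine le_trans (Real.exp_le_exp.2 ?_) e14
            nlinarith [hκq.2]
          calc u ^ (q-1) ≤ z ^ (q-1) * Real.exp (-(4*(1+q))⁻¹ * (q-1)) := by rw [← h5]; exact h4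
            _ ≤ z ^ (q-1) * (4/3) := by nlinarith
            _ = (4/3) * z ^ (q-1) := by ring
        · have : q = 1 := le_antisymm hq1 hq1'
          subst this
          simp only [sub_self, Real.rpow_zero]
          norm_num
      calc z ^ q - u ^ q ≤ q * u ^ (q-1) * (z - u) := key
        _ ≤ q * ((4/3) * z ^ (q-1)) * (z - u) := by
            apply mul_le_mul_of_nonneg_right _ (by linarith)
            exact mul_le_mul_of_nonneg_left hbound hq.le
        _ = (4/3) * q * z ^ (q-1) * (z - u) := by ring
    · -- q ≥ 1 : Bernoulli lower at z
      have hs : (-1:ℝ) ≤ u/z - 1 := by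
        have : 0 < u/z := div_pos hu hz
        linarith
      have hber := one_add_mul_self_le_rpow_one_add hs hq1
      have h1 : (1 + (u/z - 1)) = u/z := by ring
      rw [h1] at hber
      have hdiv : (u/z) ^ q = u ^ q / z ^ q := Real.div_rpow hu.le hz.le q
      rw [hdiv] at hber
      have key : z ^ q - u ^ q ≤ q * z ^ (q-1) * (z - u) := by
        rw [hz1]
        have h2 : (1 + q * (u/z - 1)) * z ^ q ≤ u ^ q := by
          rw [le_div_iff₀ hzq] at hber
          linarith
        have h3 : (1 + q * (u/z - 1)) * z ^ q = z ^ q + q * (z^q/z) * (u - z) := by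
          field_simp
        rw [h3] at h2
        linarith
      calc z ^ q - u ^ q ≤ q * z ^ (q-1) * (z - u) := key
        _ ≤ (4/3) * q * z ^ (q-1) * (z - u) := by nlinarith [mul_nonneg (mul_nonneg hq.le hzq1.le) (sub_nonneg.2 huz)]

set_option maxHeartbeats 1000000 in
lemma taylor_rpow {q z Z : ℝ} (hq : 0 < q) (hz : 0 < z) (hZ : 0 < Z)
    (h2 : z * Real.exp (-(4*(1+q))⁻¹) ≤ Z) (h1 : Z ≤ z * Real.exp ((4*(1+q))⁻¹)) :
    Z ^ (q+1) / (q+1) - z ^ (q+1) / (q+1) - z ^ q * (Z - z)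
      ≤ (2/3) * q * z ^ (q-1) * (Z - z)^2 := by
  have hq1 : (0:ℝ) < q + 1 := by linarith
  have hzq1 : (0:ℝ) ≤ z ^ (q-1) := (Real.rpow_pos_of_pos hz _).le
  set M : ℝ := (4/3) * q * z ^ (q-1) with hM
  have hM0 : 0 ≤ M := by positivity
  -- the integral identity
  have hInt1 : ∫ u in z..Z, u ^ q = (Z ^ (q+1) - z ^ (q+1)) / (q+1) :=
    integral_rpow (Or.inl (by linarith))
  have hIc : ∫ u in z..Z, (z ^ q : ℝ) = (Z - z) * z ^ q := by
    rw [intervalIntegral.integral_const]; simp [smul_eq_mul]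
  have hIrpow : IntervalIntegrable (fun u : ℝ => u ^ q) MeasureTheory.volume z Z :=
    intervalIntegral.intervalIntegrable_rpow' (by linarith)
  have hIconst : IntervalIntegrable (fun _ : ℝ => (z ^ q : ℝ)) MeasureTheory.volume z Z :=
    intervalIntegrable_const
  have hEq : ∫ u in z..Z, (u ^ q - z ^ q) =
      Z ^ (q+1) / (q+1) - z ^ (q+1) / (q+1) - z ^ q * (Z - z) := by
    rw [intervalIntegral.integral_sub hIrpow hIconst, hInt1, hIc]; ring
  rw [← hEq]
  -- pointwise bound on the relevant interval
  have hpt : ∀ u, z * Real.exp (-(4*(1+q))⁻¹) ≤ u → u ≤ z * Real.exp ((4*(1+q))⁻¹) →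
      0 < u → u ^ q - z ^ q ≤ M * |u - z| := by
    intro u hl hu hu0
    have := rpow_slope_bound hq hz hu0 hl hu
    calc u ^ q - z ^ q ≤ |u ^ q - z ^ q| := le_abs_self _
      _ ≤ M * |u - z| := this
  rcases le_total z Z with hzZ | hZz
  · have hmono : ∫ u in z..Z, (u ^ q - z ^ q) ≤ ∫ u in z..Z, M * (u - z) := by
      apply intervalIntegral.integral_mono_on hzZ (hIrpow.sub hIconst)
      · exact (continuous_const.mul (continuous_id.sub continuous_const)).intervalIntegrable z Z
      · intro u hu
        have hu0 : 0 < u := lt_of_lt_of_le hz hu.1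
        have hl : z * Real.exp (-(4*(1+q))⁻¹) ≤ u := by
          have : z * Real.exp (-(4*(1+q))⁻¹) ≤ z := by
            nlinarith [Real.exp_le_one_iff.2 (neg_nonpos.2 (by positivity : (0:ℝ) ≤ (4*(1+q))⁻¹)), hz.le,
              (Real.exp_pos (-(4*(1+q))⁻¹)).le]
          linarith [hu.1]
        have hr : u ≤ z * Real.exp ((4*(1+q))⁻¹) := le_trans hu.2 h1
        have := hpt u hl hr hu0
        rwa [abs_of_nonneg (by linarith [hu.1])] at this
    have hIval : ∫ u in z..Z, M * (u - z) = M * (Z - z)^2 / 2 := by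
      rw [intervalIntegral.integral_const_mul]
      rw [intervalIntegral.integral_sub intervalIntegral.intervalIntegrable_id intervalIntegrable_const]
      rw [integral_id, intervalIntegral.integral_const]
      simp only [smul_eq_mul]
      ring
    calc ∫ u in z..Z, (u ^ q - z ^ q) ≤ M * (Z - z)^2 / 2 := by rw [← hIval]; exact hmono
      _ = (2/3) * q * z ^ (q-1) * (Z - z)^2 := by rw [hM]; ring
  · -- Z ≤ z
    have hsymm : ∫ u in z..Z, (u ^ q - z ^ q) = ∫ u in Z..z, (z ^ q - u ^ q) := by
      rw [intervalIntegral.integral_symm]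
      rw [← intervalIntegral.integral_neg]
      congr 1; ext u; ring
    rw [hsymm]
    have hIrpow' : IntervalIntegrable (fun u : ℝ => u ^ q) MeasureTheory.volume Z z :=
      intervalIntegral.intervalIntegrable_rpow' (by linarith)
    have hmono : ∫ u in Z..z, (z ^ q - u ^ q) ≤ ∫ u in Z..z, M * (z - u) := by
      apply intervalIntegral.integral_mono_on hZz (intervalIntegrable_const.sub hIrpow')
      · exact (continuous_const.mul (continuous_const.sub continuous_id)).intervalIntegrable Z z
      · intro u hu
        have hu0 : 0 < u := lt_of_lt_of_le hZ hu.1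
        have hl : z * Real.exp (-(4*(1+q))⁻¹) ≤ u := le_trans h2 hu.1
        have hr : u ≤ z * Real.exp ((4*(1+q))⁻¹) := by
          have h1' : z ≤ z * Real.exp ((4*(1+q))⁻¹) := by
            nlinarith [Real.one_le_exp_iff.2 (by positivity : (0:ℝ) ≤ (4*(1+q))⁻¹), hz.le]
          linarith [hu.2]
        have := rpow_slope_bound hq hz hu0 hl hr
        have h3 : z ^ q - u ^ q ≤ |u ^ q - z ^ q| := by
          rw [abs_sub_comm]; exact le_abs_self _
        calc z ^ q - u ^ q ≤ |u ^ q - z ^ q| := h3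
          _ ≤ M * |u - z| := this
          _ = M * (z - u) := by rw [abs_of_nonpos (by linarith [hu.2]), neg_sub]
    have hIval : ∫ u in Z..z, M * (z - u) = M * (Z - z)^2 / 2 := by
      rw [intervalIntegral.integral_const_mul]
      rw [intervalIntegral.integral_sub intervalIntegrable_const intervalIntegral.intervalIntegrable_id]
      rw [integral_id, intervalIntegral.integral_const]
      simp only [smul_eq_mul]
      ring
    calc ∫ u in Z..z, (z ^ q - u ^ q) ≤ M * (Z - z)^2 / 2 := by rw [← hIval]; exact hmono
      _ = (2/3) * q * z ^ (q-1) * (Z - z)^2 := by rw [hM]; ring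

set_option maxHeartbeats 1000000 in
lemma row_bound {n : ℕ} (a Δ : Fin n → ℝ) (q : ℝ) (hq : 0 < q)
    (ha : ∀ j, 0 ≤ a j) (hΔ : ∀ j, |Δ j| ≤ (4*(1+q))⁻¹) :
    (∑ j, a j * Real.exp (Δ j)) ^ (q+1) / (q+1) - (∑ j, a j) ^ (q+1) / (q+1)
      ≤ ∑ j, (∑ k, a k) ^ q * a j * (Δ j + (3/4 + (361/384)*q) * (Δ j)^2) := by
  have hq1 : (0:ℝ) < q + 1 := by linarith
  set κ : ℝ := (4*(1+q))⁻¹ with hκdef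
  have hκ0 : 0 < κ := by positivity
  have hκ14 : κ ≤ 1/4 := by
    rw [hκdef]
    rw [inv_le_comm₀ (by positivity) (by norm_num)]
    nlinarith
  have hΔ14 : ∀ j, |Δ j| ≤ 1/4 := fun j => le_trans (hΔ j) hκ14
  have hΔ1 : ∀ j, |Δ j| ≤ 1 := fun j => le_trans (hΔ14 j) (by norm_num)
  set z : ℝ := ∑ j, a j with hzdef
  set Z : ℝ := ∑ j, a j * Real.exp (Δ j) with hZdef
  have hz0 : 0 ≤ z := Finset.sum_nonneg fun j _ => ha j
  rcases eq_or_lt_of_le hz0 with hz | hz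
  · -- z = 0 : all a j = 0
    have hall : ∀ j ∈ Finset.univ, a j = 0 :=
      (Finset.sum_eq_zero_iff_of_nonneg fun j _ => ha j).1 hz.symm
    have hZ0 : Z = 0 := Finset.sum_eq_zero fun j hj => by rw [hall j hj]; ring
    have hRHS : ∑ j, (∑ k, a k) ^ q * a j * (Δ j + (3/4 + (361/384)*q) * (Δ j)^2) = 0 :=
      Finset.sum_eq_zero fun j hj => by rw [hall j hj]; ring
    rw [hRHS, hZ0, ← hz]
    simp
  · -- z > 0
    have hZl : z * Real.exp (-κ) ≤ Z := by
      rw [hzdef, Finset.sum_mul]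
      apply Finset.sum_le_sum
      intro j _
      have : Real.exp (-κ) ≤ Real.exp (Δ j) :=
        Real.exp_le_exp.2 (by linarith [(abs_le.1 (hΔ j)).1])
      exact mul_le_mul_of_nonneg_left this (ha j)
    have hZu : Z ≤ z * Real.exp κ := by
      rw [hzdef, Finset.sum_mul]
      apply Finset.sum_le_sum
      intro j _
      have : Real.exp (Δ j) ≤ Real.exp κ :=
        Real.exp_le_exp.2 (by linarith [(abs_le.1 (hΔ j)).2])
      exact mul_le_mul_of_nonneg_left this (ha j)
    have hZ0 : 0 < Z := lt_of_lt_of_le (by positivity) hZl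
    have hT := taylor_rpow hq hz hZ0 hZl hZu
    have hzq : (0:ℝ) < z ^ q := Real.rpow_pos_of_pos hz q
    have hzq1 : (0:ℝ) < z ^ (q-1) := Real.rpow_pos_of_pos hz (q-1)
    -- Z - z as a sum
    have hZz : Z - z = ∑ j, a j * (Real.exp (Δ j) - 1) := by
      rw [hZdef, hzdef, ← Finset.sum_sub_distrib]
      congr 1; ext j; ring
    -- first order bound
    have bound1 : z ^ q * (Z - z) ≤ ∑ j, z ^ q * a j * (Δ j + (3/4) * (Δ j)^2) := by
      rw [hZz, Finset.mul_sum]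
      apply Finset.sum_le_sum
      intro j _
      have h := exp_le_quad (hΔ1 j)
      have : a j * (Real.exp (Δ j) - 1) ≤ a j * (Δ j + (3/4) * (Δ j)^2) :=
        mul_le_mul_of_nonneg_left (by linarith) (ha j)
      calc z ^ q * (a j * (Real.exp (Δ j) - 1))
          ≤ z ^ q * (a j * (Δ j + (3/4) * (Δ j)^2)) := mul_le_mul_of_nonneg_left this hzq.le
        _ = z ^ q * a j * (Δ j + (3/4) * (Δ j)^2) := by ring
    -- second order bound
    have bound2 : (Z - z)^2 ≤ z * ∑ j, a j * ((361/256) * (Δ j)^2) := by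
      have hCS : (∑ j, a j * (Real.exp (Δ j) - 1)) ^ 2
          ≤ (∑ j, a j) * ∑ j, a j * (Real.exp (Δ j) - 1)^2 := by
        apply Finset.sum_sq_le_sum_mul_sum_of_sq_eq_mul
        · intro j _; exact ha j
        · intro j _; exact mul_nonneg (ha j) (sq_nonneg _)
        · intro j _; ring
      have hsum : ∑ j, a j * (Real.exp (Δ j) - 1)^2 ≤ ∑ j, a j * ((361/256) * (Δ j)^2) := by
        apply Finset.sum_le_sum
        intro j _
        exact mul_le_mul_of_nonneg_left (exp_sub_one_sq (hΔ14 j)) (ha j)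
      rw [hZz]
      calc (∑ j, a j * (Real.exp (Δ j) - 1)) ^ 2
          ≤ (∑ j, a j) * ∑ j, a j * (Real.exp (Δ j) - 1)^2 := hCS
        _ ≤ z * ∑ j, a j * ((361/256) * (Δ j)^2) := by
            apply mul_le_mul_of_nonneg_left hsum hz0
    have hzz : z ^ (q-1) * z = z ^ q := by
      rw [Real.rpow_sub_one hz.ne' q]
      field_simp
    have bound3 : (2/3) * q * z ^ (q-1) * (Z - z)^2
        ≤ ∑ j, z ^ q * a j * ((361/384) * q * (Δ j)^2) := by
      calc (2/3) * q * z ^ (q-1) * (Z - z)^2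
          ≤ (2/3) * q * z ^ (q-1) * (z * ∑ j, a j * ((361/256) * (Δ j)^2)) := by
            apply mul_le_mul_of_nonneg_left bound2 (by positivity)
        _ = (z ^ (q-1) * z) * ((2/3) * q * ∑ j, a j * ((361/256) * (Δ j)^2)) := by ring
        _ = z ^ q * ((2/3) * q * ∑ j, a j * ((361/256) * (Δ j)^2)) := by rw [hzz]
        _ = ∑ j, z ^ q * a j * ((361/384) * q * (Δ j)^2) := by
            simp only [Finset.mul_sum]
            exact Finset.sum_congr rfl fun j _ => by ring
    -- combine
    calc Z ^ (q+1) / (q+1) - z ^ (q+1) / (q+1)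
        ≤ z ^ q * (Z - z) + (2/3) * q * z ^ (q-1) * (Z - z)^2 := by linarith
      _ ≤ (∑ j, z ^ q * a j * (Δ j + (3/4) * (Δ j)^2))
          + ∑ j, z ^ q * a j * ((361/384) * q * (Δ j)^2) := add_le_add bound1 bound3
      _ = ∑ j, z ^ q * a j * (Δ j + (3/4 + (361/384)*q) * (Δ j)^2) := by
          rw [← Finset.sum_add_distrib]
          congr 1; ext j; ring

lemma coord_bound {q c g Δ : ℝ} (hq : 0 < q) (hc : -1 ≤ c) (hc1 : c ≤ 1)
    (hg : -1 ≤ g) (hΔ : Δ = -(c * (4*(1+q))⁻¹) * min 1 g) :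
    g * Δ + (3/4 + (361/384)*q) * (1+g) * Δ^2 ≤ (1 - c/2) * Δ * g := by
  set κ : ℝ := (4*(1+q))⁻¹ with hκdef
  have hκ0 : 0 < κ := by positivity
  set D : ℝ := 3/4 + (361/384)*q with hDdef
  have hD0 : 0 < D := by positivity
  have hDκ : D * κ ≤ 1/4 := by
    rw [hDdef, hκdef]
    rw [mul_inv_le_iff₀ (by positivity)]
    nlinarith
  set G : ℝ := min 1 g with hGdef
  have hgg : 0 ≤ G * g := by
    rcases le_total g 1 with h | h
    · rw [hGdef, min_eq_right h]; exact mul_self_nonneg g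
    · rw [hGdef, min_eq_left h]; linarith
  have hF : (1+g) * G^2 ≤ 2 * (G * g) := by
    rcases le_total g 1 with h | h
    · rw [hGdef, min_eq_right h]
      nlinarith [sq_nonneg g]
    · rw [hGdef, min_eq_left h]
      nlinarith
  have hF0 : 0 ≤ (1+g) * G^2 := mul_nonneg (by linarith) (sq_nonneg _)
  -- reduce to the error-term inequality
  have key : D * (1+g) * Δ^2 ≤ (c^2 * κ / 2) * (G * g) := by
    have hΔ2 : Δ^2 = c^2 * κ^2 * G^2 := by rw [hΔ]; ring
    have h1 : (D * κ) * ((1+g) * G^2) ≤ (1/4) * (2 * (G * g)) := by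
      apply mul_le_mul hDκ hF hF0 (by norm_num)
    calc D * (1+g) * Δ^2 = (c^2 * κ) * ((D * κ) * ((1+g) * G^2)) := by rw [hΔ2]; ring
      _ ≤ (c^2 * κ) * ((1/4) * (2 * (G * g))) := by
          apply mul_le_mul_of_nonneg_left h1 (by positivity)
      _ = (c^2 * κ / 2) * (G * g) := by ring
  have hrhs : (1 - c/2) * Δ * g - g * Δ = (c^2 * κ / 2) * (G * g) := by
    rw [hΔ]; ring
  linarith [key, hrhs]

/-- The `j`-th coordinate of the gradient of `f_r`. -/
noncomputable def gradFr {m n : ℕ} (A : Matrix (Fin m) (Fin n) ℝ) (β : ℝ)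
    (x : Fin n → ℝ) (j : Fin n) : ℝ :=
  -1 + ∑ i, (A.mulVec (fun j' => Real.exp (x j')) i) ^ (1 / β) * A i j * Real.exp (x j)

set_option maxHeartbeats 1000000 in
/-- Descent lemma for the regularized 1-fair packing objective: for a step `Δ`
proportional to the truncated gradient, the decrease of `f_r` is controlled by
the (untruncated) gradient. -/
theorem fair_packing_descent_lemma {m n : ℕ}
    (A : Matrix (Fin m) (Fin n) ℝ) (β : ℝ)
    (hA : ∀ i j, 0 ≤ A i j) (hβ : 0 < β)
    (x c : Fin n → ℝ) (hc : ∀ j, c j ∈ Set.Icc (-1 : ℝ) 1)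
    (Δ : Fin n → ℝ)
    (hΔ : ∀ j, Δ j = -(c j * β / (4 * (1 + β))) * min 1 (gradFr A β x j)) :
    fr A β (x + Δ) - fr A β x ≤ ∑ j, (1 - c j / 2) * Δ j * gradFr A β x j := by
  have hβ1 : (0:ℝ) < 1 + β := by linarith
  set q : ℝ := 1/β with hqdef
  have hq : 0 < q := by positivity
  have hκeq : β / (4 * (1 + β)) = (4*(1+q))⁻¹ := by
    rw [hqdef]
    rw [show (4*(1+1/β)) = (4*(1+β))/β by field_simp; ring]
    rw [inv_div]
  have hq1 : q + 1 = (1+β)/β := by rw [hqdef]; field_simp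
  have hq1pos : (0:ℝ) < q + 1 := by linarith
  set a : Fin m → Fin n → ℝ := fun i j => A i j * Real.exp (x j) with hadef
  have ha : ∀ i j, 0 ≤ a i j := fun i j => mul_nonneg (hA i j) (Real.exp_pos _).le
  set z : Fin m → ℝ := fun i => ∑ j, a i j with hzdef
  have hmv : ∀ i, A.mulVec (fun j => Real.exp (x j)) i = z i := by
    intro i
    simp [Matrix.mulVec, dotProduct, hzdef, hadef]
  set B : Fin n → ℝ := fun j => ∑ i, (z i) ^ q * a i j with hBdef
  have hgB : ∀ j, gradFr A β x j = -1 + B j := by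
    intro j
    rw [gradFr, hBdef]
    congr 1
    apply Finset.sum_congr rfl
    intro i _
    rw [hmv i, hqdef, hadef]
    ring
  have hB0 : ∀ j, 0 ≤ B j := by
    intro j
    apply Finset.sum_nonneg
    intro i _
    exact mul_nonneg (Real.rpow_nonneg (Finset.sum_nonneg fun k _ => ha i k) q) (ha i j)
  have hgm1 : ∀ j, -1 ≤ gradFr A β x j := by
    intro j; rw [hgB j]; linarith [hB0 j]
  -- rewrite Δ
  have hΔ' : ∀ j, Δ j = -(c j * (4*(1+q))⁻¹) * min 1 (gradFr A β x j) := by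
    intro j
    rw [hΔ j, mul_div_assoc, hκeq]
  have hΔκ : ∀ j, |Δ j| ≤ (4*(1+q))⁻¹ := by
    intro j
    rw [hΔ' j, abs_mul, abs_neg, abs_mul]
    have hcj : |c j| ≤ 1 := abs_le.2 ⟨(hc j).1, (hc j).2⟩
    have hmin : |min 1 (gradFr A β x j)| ≤ 1 := by
      rw [abs_le]
      constructor
      · exact le_min (by norm_num) (hgm1 j)
      · exact min_le_left _ _
    have hκ0 : (0:ℝ) ≤ (4*(1+q))⁻¹ := by positivity
    calc |c j| * |(4*(1+q))⁻¹| * |min 1 (gradFr A β x j)|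
        ≤ 1 * |(4*(1+q))⁻¹| * 1 := by
          apply mul_le_mul (mul_le_mul hcj le_rfl (abs_nonneg _) (by norm_num)) hmin
            (abs_nonneg _) (by positivity)
      _ = (4*(1+q))⁻¹ := by rw [abs_of_nonneg hκ0]; ring
  -- the difference of fr
  set Z : Fin m → ℝ := fun i => ∑ j, a i j * Real.exp (Δ j) with hZdef
  have hmv2 : ∀ i, A.mulVec (fun j => Real.exp ((x + Δ) j)) i = Z i := by
    intro i
    simp only [Matrix.mulVec, dotProduct, hZdef, hadef, Pi.add_apply, Real.exp_add]
    apply Finset.sum_congr rfl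
    intro j _
    ring
  have hfr : fr A β (x + Δ) - fr A β x
      = (∑ j, -Δ j) + ∑ i, ((Z i) ^ (q+1) / (q+1) - (z i) ^ (q+1) / (q+1)) := by
    rw [fr, fr]
    have h1 : ∑ j, (x + Δ) j = (∑ j, x j) + ∑ j, Δ j := by
      rw [← Finset.sum_add_distrib]
      apply Finset.sum_congr rfl
      intro j _
      simp [Pi.add_apply]
    have h2 : ∀ i, (A.mulVec (fun j => Real.exp ((x + Δ) j)) i) ^ ((1+β)/β)
        = (Z i) ^ (q+1) := by
      intro i; rw [hmv2 i, hq1]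
    have h3 : ∀ i, (A.mulVec (fun j => Real.exp (x j)) i) ^ ((1+β)/β)
        = (z i) ^ (q+1) := by
      intro i; rw [hmv i, hq1]
    simp only [h1]
    rw [Finset.sum_congr rfl fun i _ => h2 i, Finset.sum_congr rfl fun i _ => h3 i]
    have hβq : β / (1+β) = (q+1)⁻¹ := by
      rw [hq1]; rw [inv_div]
    rw [hβq]
    rw [Finset.sum_sub_distrib, Finset.sum_neg_distrib]
    simp only [div_eq_inv_mul, Finset.mul_sum]
    ring
  rw [hfr]
  set D : ℝ := 3/4 + (361/384)*q with hDdef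
  have hrow : ∀ i : Fin m, (Z i) ^ (q+1) / (q+1) - (z i) ^ (q+1) / (q+1)
      ≤ ∑ j, (z i) ^ q * a i j * (Δ j + D * (Δ j)^2) := by
    intro i
    exact row_bound (fun j => a i j) Δ q hq (fun j => ha i j) hΔκ
  calc (∑ j, -Δ j) + ∑ i, ((Z i) ^ (q+1) / (q+1) - (z i) ^ (q+1) / (q+1))
      ≤ (∑ j, -Δ j) + ∑ i, ∑ j, (z i) ^ q * a i j * (Δ j + D * (Δ j)^2) :=
        add_le_add le_rfl (Finset.sum_le_sum fun i _ => hrow i)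
    _ = ∑ j, (-Δ j + B j * (Δ j + D * (Δ j)^2)) := by
        rw [Finset.sum_comm, ← Finset.sum_add_distrib]
        apply Finset.sum_congr rfl
        intro j _
        rw [hBdef, Finset.sum_mul]
    _ ≤ ∑ j, (1 - c j / 2) * Δ j * gradFr A β x j := by
        apply Finset.sum_le_sum
        intro j _
        have hb := coord_bound hq (hc j).1 (hc j).2 (hgm1 j) (hΔ' j)
        have hBj : B j = 1 + gradFr A β x j := by rw [hgB j]; ring
        rw [hBj]
        have hre : -Δ j + (1 + gradFr A β x j) * (Δ j + D * (Δ j)^2)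
            = gradFr A β x j * Δ j + D * (1 + gradFr A β x j) * (Δ j)^2 := by ring
        rw [hre, hDdef]
        exact hb
end

section
/- Let A be a normalized nonnegative m×n matrix, ε ∈ (0, n/2], β = ε/(6n log(2mn²/ε)), ω = log(mn/(1−ε/n)), L = max{4ω(1+β)/β, 16n log(2mn)/(3ε) + 1/3}, τ = 1/(3L), η_0 = 1/(3L), and η_k = η_{k−1}/(1−τ) for k ≥ 1, and let B = [−ω, 0]^n. Define x^{(0)} = y^{(0)} = z^{(0)} = −ω·1_n and, for k ≥ 1: x^{(k)} = τ z^{(k−1)} + (1−τ) y^{(k−1)}; z^{(k)} = argmin_{z∈B}{ (1/(2ω))‖z − z^{(k−1)}‖₂² + η_k⟨∇̄f_r(x^{(k)}), z⟩ }; y^{(k)} = x^{(k)} + (1/(η_k L))(z^{(k)} − z^{(k−1)}). Then for all k ≥ 0, the iterates x^{(k)}, y^{(k)}, z^{(k)} all lie in the box B. -/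
open scoped BigOperators

set_option maxHeartbeats 1000000 in
/-- All iterates of the accelerated descent method for 1-fair packing remain in
the box `B = [-ω, 0]^n`. -/
theorem iterates_remain_in_box {m n : ℕ}
    (A : Matrix (Fin m) (Fin n) ℝ)
    (hA : ∀ i j, 0 ≤ A i j)
    (hnorm : ∀ j, (∀ i, A i j ≤ 1) ∧ ∃ i, A i j = 1)
    (ε : ℝ) (hε0 : 0 < ε) (hεn : ε ≤ n / 2)
    (β ω L τ : ℝ)
    (hβ : β = ε / (6 * n * Real.log (2 * m * n ^ 2 / ε)))
    (hω : ω = Real.log (m * n / (1 - ε / n)))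
    (hL : L = max (4 * ω * (1 + β) / β) (16 * n * Real.log (2 * m * n) / (3 * ε) + 1 / 3))
    (hτ : τ = 1 / (3 * L))
    (η : ℕ → ℝ) (hη0 : η 0 = 1 / (3 * L)) (hηk : ∀ k, η (k + 1) = η k / (1 - τ))
    (x y z : ℕ → Fin n → ℝ)
    (hx0 : x 0 = fun _ => -ω) (hy0 : y 0 = fun _ => -ω) (hz0 : z 0 = fun _ => -ω)
    (hxk : ∀ k, x (k + 1) = τ • z k + (1 - τ) • y k)
    (hzk_mem : ∀ k i, z (k + 1) i ∈ Set.Icc (-ω) 0)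
    (hzk_min : ∀ k, ∀ w : Fin n → ℝ, (∀ i, w i ∈ Set.Icc (-ω) 0) →
      (1 / (2 * ω)) * (∑ i, (z (k + 1) i - z k i) ^ 2)
          + η (k + 1) * ∑ i, min 1 (gradFr A β (x (k + 1)) i) * z (k + 1) i
        ≤ (1 / (2 * ω)) * (∑ i, (w i - z k i) ^ 2)
          + η (k + 1) * ∑ i, min 1 (gradFr A β (x (k + 1)) i) * w i)
    (hyk : ∀ k, y (k + 1) = x (k + 1) + (1 / (η (k + 1) * L)) • (z (k + 1) - z k)) :
    ∀ k, (∀ i, x k i ∈ Set.Icc (-ω) 0) ∧ (∀ i, y k i ∈ Set.Icc (-ω) 0) ∧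
         (∀ i, z k i ∈ Set.Icc (-ω) 0) := by
  rcases Nat.eq_zero_or_pos n with hn0 | hn
  · intro k
    refine ⟨fun i => ?_, fun i => ?_, fun i => ?_⟩ <;>
      exact absurd i.isLt (by omega)
  -- n ≥ 1, hence m ≥ 1
  have hm : 0 < m := by
    obtain ⟨i0, -⟩ := (hnorm ⟨0, hn⟩).2
    exact i0.pos
  have hn1 : (1:ℝ) ≤ (n:ℝ) := by exact_mod_cast hn
  have hm1 : (1:ℝ) ≤ (m:ℝ) := by exact_mod_cast hm
  have hnpos : (0:ℝ) < (n:ℝ) := by linarith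
  -- β > 0
  have hβ0 : 0 < β := by
    rw [hβ]
    apply div_pos hε0
    have h1 : (1:ℝ) < 2 * m * n ^ 2 / ε := by
      rw [lt_div_iff₀ hε0]
      nlinarith [sq_nonneg ((n:ℝ) - 1), mul_nonneg (sub_nonneg.mpr hm1) (sq_nonneg (n:ℝ))]
    have hlog := Real.log_pos h1
    have h6n : (0:ℝ) < 6 * n := by linarith
    exact mul_pos h6n hlog
  -- ω > 0
  have hεn' : ε / n ≤ 1 / 2 := by
    rw [div_le_div_iff₀ hnpos two_pos]
    linarith
  have h1mε : 0 < 1 - ε / n := by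
    linarith
  have hω0 : 0 < ω := by
    rw [hω]
    apply Real.log_pos
    rw [lt_div_iff₀ h1mε]
    have hεn0 : 0 < ε / n := div_pos hε0 hnpos
    nlinarith
  -- L bounds
  have hLa : 4 * ω * (1 + β) / β ≤ L := by rw [hL]; exact le_max_left _ _
  have hLb : 1 / 3 < L := by
    rw [hL]
    have hlog : 0 < Real.log (2 * m * n) := by
      apply Real.log_pos
      nlinarith
    have h2 : (0:ℝ) < 16 * n * Real.log (2 * m * n) / (3 * ε) := by positivity
    exact lt_of_lt_of_le (by linarith) (le_max_right _ _)
  have hL0 : 0 < L := by linarith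
  have hτ0 : 0 < τ := by rw [hτ]; positivity
  have hτ1 : τ < 1 := by
    rw [hτ, div_lt_one (by linarith : (0:ℝ) < 3 * L)]
    linarith
  have hτ' : (0:ℝ) < 1 - τ := by linarith
  have hηpos : ∀ k, 0 < η k := by
    intro k
    induction k with
    | zero => rw [hη0]; positivity
    | succ k ih => rw [hηk]; exact div_pos ih hτ'
  have h4ωβ : 4 * ω * (1 + β) ≤ L * β := (div_le_iff₀ hβ0).mp hLa
  -- main induction
  have main : ∀ k,
      ((∀ i, x k i ∈ Set.Icc (-ω) 0) ∧ (∀ i, y k i ∈ Set.Icc (-ω) 0) ∧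
        (∀ i, z k i ∈ Set.Icc (-ω) 0)) ∧
      (∀ j, (1 / (η k * L) - τ / (1 - τ)) * (z k j + ω) ≤ y k j + ω) := by
    intro k
    induction k with
    | zero =>
      constructor
      · refine ⟨fun i => ?_, fun i => ?_, fun i => ?_⟩ <;>
          simp [hx0, hy0, hz0, Set.mem_Icc] <;> linarith
      · intro j
        simp [hy0, hz0]
    | succ k ih =>
      obtain ⟨⟨ihx, ihy, ihz⟩, ihinv⟩ := ih
      -- evaluation of x (k+1)
      have hxe : ∀ i, x (k + 1) i = τ * z k i + (1 - τ) * y k i := by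
        intro i
        have := congrFun (hxk k) i
        simpa [smul_eq_mul] using this
      have hxmem : ∀ i, x (k + 1) i ∈ Set.Icc (-ω) 0 := by
        intro i
        obtain ⟨hz1, hz2⟩ := ihz i
        obtain ⟨hy1, hy2⟩ := ihy i
        rw [Set.mem_Icc, hxe i]
        have hp1 := mul_le_mul_of_nonneg_left hz1 hτ0.le
        have hp2 := mul_le_mul_of_nonneg_left hy1 hτ'.le
        have hp3 := mul_le_mul_of_nonneg_left hz2 hτ0.le
        have hp4 := mul_le_mul_of_nonneg_left hy2 hτ'.le
        constructor <;> linarith [hp1, hp2, hp3, hp4]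
      -- evaluation of y (k+1)
      have hyf : ∀ j, y (k + 1) j
          = x (k + 1) j + (1 / (η (k + 1) * L)) * (z (k + 1) j - z k j) := by
        intro j
        have := congrFun (hyk k) j
        simpa [smul_eq_mul] using this
      have hc0 : 0 < 1 / (η (k + 1) * L) := by
        have := hηpos (k + 1); positivity
      have hcc : 1 / (η (k + 1) * L) = (1 - τ) * (1 / (η k * L)) := by
        rw [hηk]
        field_simp
      -- gradient lower bound
      have hgrad : ∀ j, (1 + β) / β * x (k + 1) j
          ≤ min 1 (gradFr A β (x (k + 1)) j) := by
        intro j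
        have hXj : x (k + 1) j ≤ 0 := (hxmem j).2
        have hco : 0 < (1 + β) / β := by positivity
        refine le_min (by nlinarith) ?_
        obtain ⟨i0, hi0⟩ := (hnorm j).2
        have hbase : ∀ i, 0 ≤ A.mulVec (fun j' => Real.exp (x (k + 1) j')) i := by
          intro i
          simp only [Matrix.mulVec, dotProduct]
          exact Finset.sum_nonneg fun j' _ => mul_nonneg (hA i j') (Real.exp_nonneg _)
        have hterm : ∀ i, 0 ≤ (A.mulVec (fun j' => Real.exp (x (k + 1) j')) i) ^ (1 / β)
            * A i j * Real.exp (x (k + 1) j) := fun i =>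
          mul_nonneg (mul_nonneg (Real.rpow_nonneg (hbase i) _) (hA i j)) (Real.exp_nonneg _)
        have hsum : (A.mulVec (fun j' => Real.exp (x (k + 1) j')) i0) ^ (1 / β)
              * A i0 j * Real.exp (x (k + 1) j)
            ≤ ∑ i, (A.mulVec (fun j' => Real.exp (x (k + 1) j')) i) ^ (1 / β)
              * A i j * Real.exp (x (k + 1) j) :=
          Finset.single_le_sum (fun i _ => hterm i) (Finset.mem_univ i0)
        have hb0 : Real.exp (x (k + 1) j)
            ≤ A.mulVec (fun j' => Real.exp (x (k + 1) j')) i0 := by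
          have h1 : A i0 j * Real.exp (x (k + 1) j)
              ≤ ∑ j', A i0 j' * Real.exp (x (k + 1) j') :=
            Finset.single_le_sum
              (fun j' _ => mul_nonneg (hA i0 j') (Real.exp_nonneg _)) (Finset.mem_univ j)
          simp only [Matrix.mulVec, dotProduct]
          rw [hi0, one_mul] at h1
          exact h1
        have hrp : Real.exp (x (k + 1) j * (1 / β))
            ≤ (A.mulVec (fun j' => Real.exp (x (k + 1) j')) i0) ^ (1 / β) := by
          have h1 : (Real.exp (x (k + 1) j)) ^ ((1:ℝ) / β)
              = Real.exp (x (k + 1) j * (1 / β)) := by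
            rw [Real.rpow_def_of_pos (Real.exp_pos _), Real.log_exp]
          rw [← h1]
          exact Real.rpow_le_rpow (Real.exp_nonneg _) hb0 (by positivity)
        have hterm0 : Real.exp (x (k + 1) j * (1 / β)) * Real.exp (x (k + 1) j)
            ≤ (A.mulVec (fun j' => Real.exp (x (k + 1) j')) i0) ^ (1 / β)
              * A i0 j * Real.exp (x (k + 1) j) := by
          rw [hi0, mul_one]
          exact mul_le_mul_of_nonneg_right hrp (Real.exp_nonneg _)
        have hexp : x (k + 1) j * (1 / β) + x (k + 1) j + 1
            ≤ Real.exp (x (k + 1) j * (1 / β)) * Real.exp (x (k + 1) j) := by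
          rw [← Real.exp_add]
          have := Real.add_one_le_exp (x (k + 1) j * (1 / β) + x (k + 1) j)
          linarith
        have heq : (1 + β) / β * x (k + 1) j
            = -1 + (x (k + 1) j * (1 / β) + x (k + 1) j + 1) := by
          field_simp
          ring
        rw [gradFr, heq]
        have := le_trans hexp (le_trans hterm0 hsum)
        linarith
      -- step upper bound from mirror-step optimality
      have hstep : ∀ j, z (k + 1) j - z k j
          ≤ 2 * ω * η (k + 1) * ((1 + β) / β * (-(x (k + 1) j))) := by
        intro j
        have hXj : x (k + 1) j ≤ 0 := (hxmem j).2
        have hco : 0 < (1 + β) / β := by positivity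
        have hRHS : 0 ≤ 2 * ω * η (k + 1) * ((1 + β) / β * (-(x (k + 1) j))) := by
          have := hηpos (k + 1)
          have h1 : 0 ≤ (1 + β) / β * (-(x (k + 1) j)) := by nlinarith
          have h2 : 0 ≤ 2 * ω * η (k + 1) := by positivity
          exact mul_nonneg h2 h1
        rcases le_or_gt (z (k + 1) j - z k j) 0 with hD | hD
        · linarith
        · -- use the test vector w = update (z (k+1)) j (z k j)
          have hwmem : ∀ i, Function.update (z (k + 1)) j (z k j) i ∈ Set.Icc (-ω) 0 := by
            intro i
            by_cases h : i = j
            · subst h; rw [Function.update_self]; exact ihz i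
            · rw [Function.update_of_ne h]; exact hzk_mem k i
          have hopt := hzk_min k _ hwmem
          have e2 : ∑ i, (Function.update (z (k + 1)) j (z k j) i - z k i) ^ 2
              = ∑ i, (z (k + 1) i - z k i) ^ 2 - (z (k + 1) j - z k j) ^ 2 := by
            have h1 := (Finset.add_sum_erase Finset.univ
              (fun i => (Function.update (z (k + 1)) j (z k j) i - z k i) ^ 2)
              (Finset.mem_univ j)).symm
            have h2 := (Finset.add_sum_erase Finset.univ
              (fun i => (z (k + 1) i - z k i) ^ 2) (Finset.mem_univ j)).symm
            have h3 : ∑ i ∈ Finset.univ.erase j,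
                  (Function.update (z (k + 1)) j (z k j) i - z k i) ^ 2
                = ∑ i ∈ Finset.univ.erase j, (z (k + 1) i - z k i) ^ 2 :=
              Finset.sum_congr rfl fun i hi => by
                rw [Function.update_of_ne (Finset.ne_of_mem_erase hi)]
            rw [h1, h3, h2, Function.update_self]
            ring
          have e3 : ∑ i, min 1 (gradFr A β (x (k + 1)) i)
                * Function.update (z (k + 1)) j (z k j) i
              = ∑ i, min 1 (gradFr A β (x (k + 1)) i) * z (k + 1) i
                - min 1 (gradFr A β (x (k + 1)) j) * (z (k + 1) j - z k j) := by
            have h1 := (Finset.add_sum_erase Finset.univ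
              (fun i => min 1 (gradFr A β (x (k + 1)) i)
                * Function.update (z (k + 1)) j (z k j) i) (Finset.mem_univ j)).symm
            have h2 := (Finset.add_sum_erase Finset.univ
              (fun i => min 1 (gradFr A β (x (k + 1)) i) * z (k + 1) i)
              (Finset.mem_univ j)).symm
            have h3 : ∑ i ∈ Finset.univ.erase j, min 1 (gradFr A β (x (k + 1)) i)
                  * Function.update (z (k + 1)) j (z k j) i
                = ∑ i ∈ Finset.univ.erase j,
                  min 1 (gradFr A β (x (k + 1)) i) * z (k + 1) i :=
              Finset.sum_congr rfl fun i hi => by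
                rw [Function.update_of_ne (Finset.ne_of_mem_erase hi)]
            rw [h1, h3, h2, Function.update_self]
            ring
          rw [e2, e3] at hopt
          have hDsq : 1 / (2 * ω) * (z (k + 1) j - z k j) ^ 2
              + η (k + 1) * (min 1 (gradFr A β (x (k + 1)) j) * (z (k + 1) j - z k j))
              ≤ 0 := by linarith
          have h5 : (z (k + 1) j - z k j) ^ 2
              ≤ 2 * ω * (η (k + 1) * (-(min 1 (gradFr A β (x (k + 1)) j)))
                * (z (k + 1) j - z k j)) := by
            have h6 : 1 / (2 * ω) * (z (k + 1) j - z k j) ^ 2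
                ≤ η (k + 1) * (-(min 1 (gradFr A β (x (k + 1)) j)))
                  * (z (k + 1) j - z k j) := by
              nlinarith
            have h7 : (z (k + 1) j - z k j) ^ 2
                = 2 * ω * (1 / (2 * ω) * (z (k + 1) j - z k j) ^ 2) := by
              field_simp
            rw [h7]
            exact mul_le_mul_of_nonneg_left h6 (by linarith)
          have h6 : -(min 1 (gradFr A β (x (k + 1)) j))
              ≤ (1 + β) / β * (-(x (k + 1) j)) := by
            have := hgrad j
            nlinarith
          have h8 : (z (k + 1) j - z k j) * (z (k + 1) j - z k j)
              ≤ (2 * ω * η (k + 1) * ((1 + β) / β * (-(x (k + 1) j))))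
                * (z (k + 1) j - z k j) := by
            have h9 : 0 ≤ 2 * ω * η (k + 1) * (z (k + 1) j - z k j) := by
              have := hηpos (k + 1)
              positivity
            nlinarith [mul_le_mul_of_nonneg_left h6 h9]
          exact le_of_mul_le_mul_right (by nlinarith) hD
      -- upper bound on y (k+1)
      have hyup : ∀ j, y (k + 1) j ≤ 0 := by
        intro j
        have hXj : x (k + 1) j ≤ 0 := (hxmem j).2
        have hηk1 := hηpos (k + 1)
        have h1 : y (k + 1) j ≤ x (k + 1) j
            + (1 / (η (k + 1) * L)) * (2 * ω * η (k + 1)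
              * ((1 + β) / β * (-(x (k + 1) j)))) := by
          rw [hyf j]
          have := mul_le_mul_of_nonneg_left (hstep j) hc0.le
          linarith
        have h2 : (1 / (η (k + 1) * L)) * (2 * ω * η (k + 1)
              * ((1 + β) / β * (-(x (k + 1) j))))
            = 2 * ω * (1 + β) / (L * β) * (-(x (k + 1) j)) := by
          field_simp
        have h3 : 2 * ω * (1 + β) / (L * β) ≤ 1 := by
          rw [div_le_one (by positivity)]
          nlinarith
        have h4 : 0 ≤ 2 * ω * (1 + β) / (L * β) := by positivity
        rw [h2] at h1
        nlinarith
      -- identity for y (k+1)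
      have hid : ∀ j, y (k + 1) j + ω
          = (τ - 1 / (η (k + 1) * L)) * (z k j + ω)
            + (1 - τ) * (y k j + ω) + (1 / (η (k + 1) * L)) * (z (k + 1) j + ω) := by
        intro j
        rw [hyf j, hxe j]
        ring
      -- lower bound on y (k+1) + ω
      have hlow : ∀ j, (1 / (η (k + 1) * L)) * (z (k + 1) j + ω) ≤ y (k + 1) j + ω := by
        intro j
        have h5' : ((1 - τ) * (1 / (η k * L)) - τ) * (z k j + ω)
            ≤ (1 - τ) * (y k j + ω) := by
          have hstep1 : ((1 - τ) * (1 / (η k * L)) - τ) * (z k j + ω)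
              = (1 - τ) * ((1 / (η k * L) - τ / (1 - τ)) * (z k j + ω)) := by
            field_simp
            try ring
          rw [hstep1]
          exact mul_le_mul_of_nonneg_left (ihinv j) hτ'.le
        rw [hid j, hcc]
        linarith
      -- conclusion for step k+1
      have hQ : ∀ j, 0 ≤ z (k + 1) j + ω := by
        intro j
        have := (hzk_mem k j).1
        linarith
      refine ⟨⟨hxmem, fun j => ?_, hzk_mem k⟩, fun j => ?_⟩
      · rw [Set.mem_Icc]
        refine ⟨?_, hyup j⟩
        have h1 := hlow j
        have h2 : 0 ≤ (1 / (η (k + 1) * L)) * (z (k + 1) j + ω) :=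
          mul_nonneg hc0.le (hQ j)
        linarith
      · have h1 := hlow j
        have h2 : (1 / (η (k + 1) * L) - τ / (1 - τ)) * (z (k + 1) j + ω)
            ≤ (1 / (η (k + 1) * L)) * (z (k + 1) j + ω) := by
          apply mul_le_mul_of_nonneg_right _ (hQ j)
          have h3 : 0 ≤ τ / (1 - τ) := by positivity
          linarith
        linarith
  intro k
  exact (main k).1
end

section
/- Let A be a nonnegative m×n matrix, let λ ∈ Δ_m be such that A^Tλ has strictly positive coordinates, let p^λ = c(A^Tλ), and suppose A p^λ ≤ (1+ε)·1_m for some ε ≥ 0. Let λ* be a minimizer of g over {λ ∈ Δ_m : A^Tλ > 0}. Then g(λ) − g(λ*) ≤ n log(1+ε) ≤ nε. -/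
open scoped BigOperators

/-- If `λ ∈ Δ_m` has `A^Tλ > 0` and its centroid point `p^λ = c(A^Tλ)` satisfies
`A p^λ ≤ (1+ε)·1`, then `λ` is an `n·log(1+ε) ≤ n·ε` approximate minimizer of
the dual objective `g`. -/
theorem the_proxy_is_indeed_a_proxy {m n : ℕ}
    (A : Matrix (Fin m) (Fin n) ℝ) (hA : ∀ i j, 0 ≤ A i j)
    (ε : ℝ) (hε : 0 ≤ ε)
    (lam : Fin m → ℝ) (hlam_nonneg : ∀ i, 0 ≤ lam i) (hlam_sum : ∑ i, lam i = 1)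
    (hlam_pos : ∀ j, 0 < A.transpose.mulVec lam j)
    (hfeas : ∀ i, A.mulVec (fun j => 1 / ((n : ℝ) * A.transpose.mulVec lam j)) i ≤ 1 + ε)
    (lams : Fin m → ℝ) (hlams_nonneg : ∀ i, 0 ≤ lams i) (hlams_sum : ∑ i, lams i = 1)
    (hlams_pos : ∀ j, 0 < A.transpose.mulVec lams j)
    (hmin : ∀ μ : Fin m → ℝ, (∀ i, 0 ≤ μ i) → (∑ i, μ i = 1) →
      (∀ j, 0 < A.transpose.mulVec μ j) →
      (-∑ j, Real.log (A.transpose.mulVec lams j) - n * Real.log n)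
        ≤ -∑ j, Real.log (A.transpose.mulVec μ j) - n * Real.log n) :
    ((-∑ j, Real.log (A.transpose.mulVec lam j) - n * Real.log n)
        - (-∑ j, Real.log (A.transpose.mulVec lams j) - n * Real.log n)
      ≤ n * Real.log (1 + ε)) ∧
    (n : ℝ) * Real.log (1 + ε) ≤ n * ε := by
  have h1ε : (0:ℝ) < 1 + ε := by linarith
  have hlog : Real.log (1 + ε) ≤ ε := by
    have := Real.log_le_sub_one_of_pos h1ε
    linarith
  have hlog0 : 0 ≤ Real.log (1 + ε) := Real.log_nonneg (by linarith)
  constructor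
  · rcases Nat.eq_zero_or_pos n with hn | hn
    · subst hn
      simp
    have hn' : (0:ℝ) < n := by exact_mod_cast hn
    set h := A.transpose.mulVec lam with hh
    set hsv := A.transpose.mulVec lams with hhs
    -- key: ∑ j, hsv j / h j ≤ n * (1+ε)
    have key : ∑ j, hsv j / h j ≤ (n:ℝ) * (1 + ε) := by
      have e1 : ∀ j, hsv j / h j = (n:ℝ) * (hsv j * (1 / ((n:ℝ) * h j))) := by
        intro j
        have hj := (hlam_pos j).ne'
        field_simp
      have swap : ∑ j, hsv j * (1 / ((n:ℝ) * h j))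
          = ∑ i, lams i * A.mulVec (fun j => 1 / ((n:ℝ) * h j)) i := by
        simp only [hhs, hh, Matrix.mulVec, Matrix.transpose_apply, dotProduct,
          Finset.sum_mul, Finset.mul_sum]
        rw [Finset.sum_comm]
        apply Finset.sum_congr rfl
        intro i _
        apply Finset.sum_congr rfl
        intro j _
        ring
      have bnd : ∑ i, lams i * A.mulVec (fun j => 1 / ((n:ℝ) * h j)) i ≤ 1 + ε := by
        calc ∑ i, lams i * A.mulVec (fun j => 1 / ((n:ℝ) * h j)) i
            ≤ ∑ i, lams i * (1 + ε) := by
              apply Finset.sum_le_sum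
              intro i _
              exact mul_le_mul_of_nonneg_left (hfeas i) (hlams_nonneg i)
          _ = 1 + ε := by rw [← Finset.sum_mul, hlams_sum, one_mul]
      calc ∑ j, hsv j / h j = (n:ℝ) * ∑ j, hsv j * (1 / ((n:ℝ) * h j)) := by
            rw [Finset.mul_sum]; exact Finset.sum_congr rfl fun j _ => e1 j
        _ ≤ (n:ℝ) * (1 + ε) := by
            rw [swap]
            exact mul_le_mul_of_nonneg_left bnd hn'.le
    have per : ∀ j, Real.log (hsv j) - Real.log (h j)
        ≤ Real.log (1 + ε) + ((hsv j / h j) / (1 + ε) - 1) := by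
      intro j
      have hr : 0 < hsv j / h j := div_pos (hlams_pos j) (hlam_pos j)
      have hx : 0 < (hsv j / h j) / (1 + ε) := div_pos hr h1ε
      have h2 := Real.log_le_sub_one_of_pos hx
      rw [Real.log_div hr.ne' h1ε.ne'] at h2
      rw [← Real.log_div (hlams_pos j).ne' (hlam_pos j).ne']
      linarith
    have total : ∑ j, (Real.log (hsv j) - Real.log (h j))
        ≤ (n:ℝ) * Real.log (1 + ε) + ((∑ j, hsv j / h j) / (1 + ε) - n) := by
      calc ∑ j, (Real.log (hsv j) - Real.log (h j))
          ≤ ∑ j : Fin n, (Real.log (1 + ε) + ((hsv j / h j) / (1 + ε) - 1)) :=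
            Finset.sum_le_sum fun j _ => per j
        _ = (n:ℝ) * Real.log (1 + ε) + ((∑ j, hsv j / h j) / (1 + ε) - n) := by
            simp [Finset.sum_add_distrib, Finset.sum_sub_distrib, Finset.sum_div]
    have hdiv : (∑ j, hsv j / h j) / (1 + ε) ≤ (n:ℝ) := by
      rw [div_le_iff₀ h1ε]
      exact key
    rw [Finset.sum_sub_distrib] at total
    linarith
  · exact mul_le_mul_of_nonneg_left hlog (by positivity)
end

section
/- Let A be a normalized nonnegative m×n matrix and let λ* ∈ Δ_m, with A^Tλ* having strictly positive coordinates, be a minimizer of g over {λ ∈ Δ_m : A^Tλ > 0}. Then the point x* = c(A^Tλ*), i.e., x*_i = 1/(n (A^Tλ*)_i), is feasible (A x* ≤ 1_m) and maximizes f(x) = Σ_{i=1}^n log x_i over P = {x ∈ ℝ_{≥0}^n : Ax ≤ 1_m}. -/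
open scoped BigOperators

-- key feasibility lemma
private theorem key_lemma {m n : ℕ}
    (A : Matrix (Fin m) (Fin n) ℝ) (hA : ∀ i j, 0 ≤ A i j)
    (lams : Fin m → ℝ) (hlams_nonneg : ∀ i, 0 ≤ lams i) (hlams_sum : ∑ i, lams i = 1)
    (hlams_pos : ∀ j, 0 < A.transpose.mulVec lams j)
    (hmin : ∀ μ : Fin m → ℝ, (∀ i, 0 ≤ μ i) → (∑ i, μ i = 1) →
      (∀ j, 0 < A.transpose.mulVec μ j) →
      (∑ j, Real.log (A.transpose.mulVec μ j)) ≤ ∑ j, Real.log (A.transpose.mulVec lams j))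
    (i : Fin m) :
    ∑ j, A i j / A.transpose.mulVec lams j ≤ n := by
  set h : Fin n → ℝ := A.transpose.mulVec lams with hh_def
  have hhpos : ∀ j, 0 < h j := hlams_pos
  set d : Fin n → ℝ := fun j => A i j - h j with hd_def
  set C : ℝ := ∑ j, 2 * (d j)^2 / (h j)^2 with hC_def
  have hC0 : 0 ≤ C := Finset.sum_nonneg (fun j _ => by positivity)
  have main : ∀ t : ℝ, 0 < t → t ≤ 1/2 → ∑ j, d j / h j ≤ t * C := by
    intro t ht0 ht2
    set μ : Fin m → ℝ := fun k => (1 - t) * lams k + t * (if k = i then 1 else 0) with hμ_def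
    have hys : ∀ j, A.transpose.mulVec μ j = (1 - t) * h j + t * A i j := by
      intro j
      have e1 : ∀ k, A k j * μ k
          = (1 - t) * (A k j * lams k) + t * (if k = i then A k j else 0) := by
        intro k
        simp only [hμ_def]
        by_cases hk : k = i <;> simp [hk] <;> ring
      show ∑ k, A k j * μ k = _
      rw [Finset.sum_congr rfl (fun k _ => e1 k), Finset.sum_add_distrib,
        ← Finset.mul_sum, ← Finset.mul_sum, Finset.sum_ite_eq']
      simp [hh_def, Matrix.mulVec, Matrix.transpose_apply, dotProduct]
    have hμnn : ∀ k, 0 ≤ μ k := by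
      intro k
      have h1 : (0:ℝ) ≤ 1 - t := by linarith
      have h2 : (0:ℝ) ≤ (if k = i then (1:ℝ) else 0) := by split <;> norm_num
      exact add_nonneg (mul_nonneg h1 (hlams_nonneg k)) (mul_nonneg ht0.le h2)
    have hμsum : ∑ k, μ k = 1 := by
      simp only [hμ_def]
      rw [Finset.sum_add_distrib, ← Finset.mul_sum, ← Finset.mul_sum, Finset.sum_ite_eq']
      simp [hlams_sum]
    have hμpos : ∀ j, 0 < A.transpose.mulVec μ j := by
      intro j
      rw [hys j]
      have := hhpos j
      have := hA i j
      nlinarith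
    have hlog : ∑ j, Real.log ((1 - t) * h j + t * A i j) ≤ ∑ j, Real.log (h j) := by
      have := hmin μ hμnn hμsum hμpos
      calc ∑ j, Real.log ((1 - t) * h j + t * A i j)
          = ∑ j, Real.log (A.transpose.mulVec μ j) :=
            Finset.sum_congr rfl (fun j _ => by rw [hys j])
        _ ≤ _ := this
    -- per-j lower bound on log difference
    have hyspos : ∀ j, 0 < (1 - t) * h j + t * A i j := fun j => by
      have := hμpos j; rwa [hys j] at this
    have hys2 : ∀ j, h j / 2 ≤ (1 - t) * h j + t * A i j := by
      intro j
      have := hhpos j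
      have := hA i j
      nlinarith
    have per : ∀ j, 1 - h j / ((1 - t) * h j + t * A i j)
        ≤ Real.log ((1 - t) * h j + t * A i j) - Real.log (h j) := by
      intro j
      have hpos : 0 < h j / ((1 - t) * h j + t * A i j) := div_pos (hhpos j) (hyspos j)
      have := Real.log_le_sub_one_of_pos hpos
      rw [Real.log_div (hhpos j).ne' (hyspos j).ne'] at this
      linarith
    have hsum1 : ∑ j, (1 - h j / ((1 - t) * h j + t * A i j)) ≤ 0 := by
      calc ∑ j, (1 - h j / ((1 - t) * h j + t * A i j))
          ≤ ∑ j, (Real.log ((1 - t) * h j + t * A i j) - Real.log (h j)) :=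
            Finset.sum_le_sum (fun j _ => per j)
        _ = (∑ j, Real.log ((1 - t) * h j + t * A i j)) - ∑ j, Real.log (h j) :=
            Finset.sum_sub_distrib _ _
        _ ≤ 0 := by linarith
    have hone : ∀ j, 1 - h j / ((1 - t) * h j + t * A i j)
        = t * (d j / ((1 - t) * h j + t * A i j)) := by
      intro j
      have := (hyspos j).ne'
      simp only [hd_def]
      rw [one_sub_div this, mul_div_assoc']
      congr 1
      ring
    have hsum2 : ∑ j, d j / ((1 - t) * h j + t * A i j) ≤ 0 := by
      have : t * ∑ j, d j / ((1 - t) * h j + t * A i j) ≤ 0 := by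
        rw [Finset.mul_sum]
        calc ∑ j, t * (d j / ((1 - t) * h j + t * A i j))
            = ∑ j, (1 - h j / ((1 - t) * h j + t * A i j)) :=
              Finset.sum_congr rfl (fun j _ => (hone j).symm)
          _ ≤ 0 := hsum1
      nlinarith [this]
    -- compare d/h with d/ys
    have perj : ∀ j, d j / h j ≤ d j / ((1 - t) * h j + t * A i j) + t * (2 * (d j)^2 / (h j)^2) := by
      intro j
      have h1 : d j / h j - d j / ((1 - t) * h j + t * A i j)
          = t * (d j)^2 / (h j * ((1 - t) * h j + t * A i j)) := by
        have := (hhpos j).ne'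
        have := (hyspos j).ne'
        rw [div_sub_div _ _ (hhpos j).ne' (hyspos j).ne']
        congr 1
        simp only [hd_def]
        ring
      have h2 : t * (d j)^2 / (h j * ((1 - t) * h j + t * A i j)) ≤ t * (2 * (d j)^2 / (h j)^2) := by
        rw [div_le_iff₀ (mul_pos (hhpos j) (hyspos j))]
        have hys2j := hys2 j
        have hh := hhpos j
        have : t * (2 * (d j)^2 / (h j)^2) * (h j * ((1 - t) * h j + t * A i j))
            = 2 * t * (d j)^2 * (((1 - t) * h j + t * A i j) / h j) := by
          field_simp
        rw [this]
        have h3 : (1:ℝ) ≤ 2 * (((1 - t) * h j + t * A i j) / h j) := by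
          rw [← mul_div_assoc, le_div_iff₀ hh]
          linarith [hys2 j]
        nlinarith [mul_le_mul_of_nonneg_left h3 (show (0:ℝ) ≤ t * (d j)^2 by positivity)]
      linarith
    calc ∑ j, d j / h j
        ≤ ∑ j, (d j / ((1 - t) * h j + t * A i j) + t * (2 * (d j)^2 / (h j)^2)) :=
          Finset.sum_le_sum (fun j _ => perj j)
      _ = (∑ j, d j / ((1 - t) * h j + t * A i j)) + t * C := by
          rw [Finset.sum_add_distrib, ← Finset.mul_sum]
      _ ≤ t * C := by linarith
  -- conclude S ≤ 0
  have hS : ∑ j, d j / h j ≤ 0 := by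
    have hε : ∀ ε : ℝ, 0 < ε → ∑ j, d j / h j ≤ 0 + ε := by
      intro ε hε
      set t : ℝ := min (1/2) (ε / (C + 1)) with ht_def
      have ht0 : 0 < t := lt_min (by norm_num) (div_pos hε (by linarith))
      have ht2 : t ≤ 1/2 := min_le_left _ _
      have htle : t ≤ ε / (C + 1) := min_le_right _ _
      have h1 : t * (C + 1) ≤ ε := by
        rw [← div_mul_cancel₀ ε (show C + 1 ≠ 0 by linarith)]
        exact mul_le_mul_of_nonneg_right htle (by linarith)
      have := main t ht0 ht2
      nlinarith
    linarith [le_of_forall_pos_le_add hε]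
  have hfinal : ∑ j, A i j / h j = (∑ j, d j / h j) + n := by
    have : ∀ j, A i j / h j = d j / h j + 1 := by
      intro j
      have := (hhpos j).ne'
      field_simp [hd_def]
      simp only [hd_def]
      ring
    rw [Finset.sum_congr rfl (fun j _ => this j), Finset.sum_add_distrib]
    simp
  rw [hfinal]
  linarith

/-- For a normalized nonnegative matrix `A`, if `λ*` minimizes the dual
objective `g` over `{λ ∈ Δ_m : A^Tλ > 0}`, then the centroid point
`x* = c(A^Tλ*)` is feasible and maximizes `f(x) = ∑ log xᵢ` over the feasible
region of the 1-fair packing problem. -/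
theorem dual_minimizer_gives_primal_maximizer {m n : ℕ}
    (A : Matrix (Fin m) (Fin n) ℝ) (hA : ∀ i j, 0 ≤ A i j)
    (hnorm : ∀ j, (∀ i, A i j ≤ 1) ∧ ∃ i, A i j = 1)
    (lams : Fin m → ℝ) (hlams_nonneg : ∀ i, 0 ≤ lams i) (hlams_sum : ∑ i, lams i = 1)
    (hlams_pos : ∀ j, 0 < A.transpose.mulVec lams j)
    (hmin : ∀ μ : Fin m → ℝ, (∀ i, 0 ≤ μ i) → (∑ i, μ i = 1) →
      (∀ j, 0 < A.transpose.mulVec μ j) →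
      (-∑ j, Real.log (A.transpose.mulVec lams j) - n * Real.log n)
        ≤ -∑ j, Real.log (A.transpose.mulVec μ j) - n * Real.log n) :
    (∀ i, A.mulVec (fun j => 1 / ((n : ℝ) * A.transpose.mulVec lams j)) i ≤ 1) ∧
    (∀ x : Fin n → ℝ, (∀ j, 0 < x j) → (∀ i, A.mulVec x i ≤ 1) →
      ∑ j, Real.log (x j)
        ≤ ∑ j, Real.log (1 / ((n : ℝ) * A.transpose.mulVec lams j))) := by
  have hmin' : ∀ μ : Fin m → ℝ, (∀ i, 0 ≤ μ i) → (∑ i, μ i = 1) →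
      (∀ j, 0 < A.transpose.mulVec μ j) →
      (∑ j, Real.log (A.transpose.mulVec μ j)) ≤ ∑ j, Real.log (A.transpose.mulVec lams j) := by
    intro μ h1 h2 h3
    have := hmin μ h1 h2 h3
    linarith
  have key := key_lemma A hA lams hlams_nonneg hlams_sum hlams_pos hmin'
  set h : Fin n → ℝ := A.transpose.mulVec lams with hh_def
  have hhpos : ∀ j, 0 < h j := hlams_pos
  constructor
  · intro i
    rcases Nat.eq_zero_or_pos n with hn | hn
    · subst hn
      show dotProduct _ _ ≤ 1
      simp [dotProduct]
    · have hn' : (0:ℝ) < n := by exact_mod_cast hn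
      have e1 : A.mulVec (fun j => 1 / ((n : ℝ) * h j)) i = (∑ j, A i j / h j) / n := by
        show ∑ j, A i j * (1 / ((n:ℝ) * h j)) = _
        rw [Finset.sum_div]
        refine Finset.sum_congr rfl (fun j _ => ?_)
        rw [mul_one_div, div_div, mul_comm (h j) (n:ℝ)]
      rw [e1, div_le_one hn']
      exact key i
  · intro x hx hfeas
    -- sum swap: ∑_j h j * x j ≤ 1
    have hswap : ∑ j, h j * x j = ∑ i, lams i * A.mulVec x i := by
      calc ∑ j, h j * x j = ∑ j, ∑ i, lams i * (A i j * x j) := by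
            refine Finset.sum_congr rfl (fun j _ => ?_)
            show (∑ i, A i j * lams i) * x j = _
            rw [Finset.sum_mul]
            exact Finset.sum_congr rfl (fun i _ => by ring)
        _ = ∑ i, ∑ j, lams i * (A i j * x j) := Finset.sum_comm
        _ = ∑ i, lams i * A.mulVec x i := by
            refine Finset.sum_congr rfl (fun i _ => ?_)
            show _ = lams i * ∑ j, A i j * x j
            rw [Finset.mul_sum]
    have hsum1 : ∑ j, h j * x j ≤ 1 := by
      rw [hswap, ← hlams_sum]
      exact Finset.sum_le_sum (fun i _ => by nlinarith [hlams_nonneg i, hfeas i])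
    -- per-j log bound
    have per : ∀ j, Real.log (x j) - Real.log (1 / ((n:ℝ) * h j)) ≤ (n:ℝ) * (h j * x j) - 1 := by
      intro j
      have hn' : (0:ℝ) < n := by exact_mod_cast j.pos
      have hpos : 0 < x j * ((n:ℝ) * h j) := mul_pos (hx j) (mul_pos hn' (hhpos j))
      have := Real.log_le_sub_one_of_pos hpos
      rw [Real.log_mul (hx j).ne' (mul_pos hn' (hhpos j)).ne'] at this
      rw [one_div, Real.log_inv]
      nlinarith [this]
    calc ∑ j, Real.log (x j)
        = ∑ j, (Real.log (1 / ((n:ℝ) * h j)) + (Real.log (x j) - Real.log (1 / ((n:ℝ) * h j)))) := by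
          refine Finset.sum_congr rfl (fun j _ => by ring)
      _ ≤ ∑ j, (Real.log (1 / ((n:ℝ) * h j)) + ((n:ℝ) * (h j * x j) - 1)) := by
          exact Finset.sum_le_sum (fun j _ => by linarith [per j])
      _ = (∑ j, Real.log (1 / ((n:ℝ) * h j))) + ((n:ℝ) * ∑ j, h j * x j - n) := by
          rw [Finset.sum_add_distrib, Finset.sum_sub_distrib, ← Finset.mul_sum]
          simp
      _ ≤ ∑ j, Real.log (1 / ((n:ℝ) * h j)) := by nlinarith [hsum1, Nat.cast_nonneg (α := ℝ) n]
end

section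
/- Let A be a nonnegative m×n matrix. Then the set c(D⁺) = { x ∈ ℝ_{>0}^n : there exists λ ∈ Δ_m such that c(x)_i ≤ (A^Tλ)_i for all i ∈ [n] } is convex, where c(x)_i = 1/(n x_i). -/
open scoped BigOperators

lemma comb_pos {x y a b : ℝ} (hx : 0 < x) (hy : 0 < y) (ha : 0 ≤ a) (hb : 0 ≤ b)
    (hab : a + b = 1) : 0 < a * x + b * y := by
  rcases ha.lt_or_eq with h | h
  · nlinarith [mul_pos h hx, mul_nonneg hb hy.le]
  · have hb1 : b = 1 := by linarith
    simp [← h, hb1, hy]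

lemma inv_comb_le {x y a b : ℝ} (hx : 0 < x) (hy : 0 < y) (ha : 0 ≤ a) (hb : 0 ≤ b)
    (hab : a + b = 1) : 1 / (a * x + b * y) ≤ a * (1 / x) + b * (1 / y) := by
  have hz : 0 < a * x + b * y := comb_pos hx hy ha hb hab
  have hb' : b = 1 - a := by linarith
  subst hb'
  rw [div_le_iff₀ hz, ← sub_nonneg]
  have expand : (a * (1 / x) + (1 - a) * (1 / y)) * (a * x + (1 - a) * y) - 1 =
      (a * (1 - a) * (x - y) ^ 2) / (x * y) := by
    field_simp
    ring
  rw [expand]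
  positivity

/-- The image `c(D⁺)` of the set of feasible positive constraints under the
centroid map is convex. -/
theorem centroid_image_of_dominated_constraints_convex {m n : ℕ}
    (A : Matrix (Fin m) (Fin n) ℝ) (hA : ∀ i j, 0 ≤ A i j) :
    Convex ℝ {x : Fin n → ℝ | (∀ i, 0 < x i) ∧
      ∃ lam : Fin m → ℝ, (∀ i, 0 ≤ lam i) ∧ (∑ i, lam i = 1) ∧
        ∀ i, 1 / ((n : ℝ) * x i) ≤ A.transpose.mulVec lam i} := by
  rintro x ⟨hx, lam, hlam, hlsum, hle⟩ y ⟨hy, mu, hmu, hmsum, hmle⟩ a b ha hb hab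
  refine ⟨fun i => ?_, fun j => a * lam j + b * mu j, fun j => ?_, ?_, fun i => ?_⟩
  · simpa using comb_pos (hx i) (hy i) ha hb hab
  · exact add_nonneg (mul_nonneg ha (hlam j)) (mul_nonneg hb (hmu j))
  · rw [Finset.sum_add_distrib, ← Finset.mul_sum, ← Finset.mul_sum, hlsum, hmsum,
      mul_one, mul_one, hab]
  · have hn : (0 : ℝ) < n := by exact_mod_cast i.pos
    have hmv : A.transpose.mulVec (fun j => a * lam j + b * mu j) i =
        a * A.transpose.mulVec lam i + b * A.transpose.mulVec mu i := by
      simp [Matrix.mulVec, dotProduct, mul_add, Finset.sum_add_distrib,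
        Finset.mul_sum, mul_left_comm]
    rw [hmv]
    have h1 : (1 : ℝ) / ((n : ℝ) * ((a • x + b • y) i)) =
        1 / (a * ((n : ℝ) * x i) + b * ((n : ℝ) * y i)) := by
      simp only [Pi.add_apply, Pi.smul_apply, smul_eq_mul]
      ring_nf
    rw [h1]
    calc 1 / (a * ((n : ℝ) * x i) + b * ((n : ℝ) * y i))
        ≤ a * (1 / ((n : ℝ) * x i)) + b * (1 / ((n : ℝ) * y i)) :=
          inv_comb_le (mul_pos hn (hx i)) (mul_pos hn (hy i)) ha hb hab
      _ ≤ a * A.transpose.mulVec lam i + b * A.transpose.mulVec mu i :=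
          add_le_add (mul_le_mul_of_nonneg_left (hle i) ha)
            (mul_le_mul_of_nonneg_left (hmle i) hb)
end

section
/- Let σ, τ > 0, write W⁺ = max{σ,τ} and W⁻ = min{σ,τ}, let δ ∈ (0, 2W⁻], set η = δ/(4W⁻), and let s = 1 if τ ≥ σ and s = −1 otherwise. Let ℓ^{(1)}, …, ℓ^{(K)} ∈ [−σ, τ]^{m̃} be arbitrary loss vectors with K a natural number satisfying K ≥ 8στ log(m̃)/δ². Define weights Λ^{(1)} = 1_{m̃} and Λ^{(k+1)} = Λ^{(k)} ⊙ (1_{m̃} − (η/W⁺) ℓ^{(k)}), where ⊙ is the entrywise product. Then for every u ∈ Δ_{m̃}: (1/K) Σ_{k=1}^{K} ⟨ℓ^{(k)}, Λ^{(k)}/‖Λ^{(k)}‖₁⟩ ≤ δ + ((1 + sη)/K) Σ_{k=1}^{K} ⟨ℓ^{(k)}, u⟩. -/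
open scoped BigOperators

/-- For `|x| ≤ 1/2`, `log (1 - x) ≥ -x - x²`. -/
lemma log_one_sub_ge_aux {x : ℝ} (h : |x| ≤ 1/2) : -x - x^2 ≤ Real.log (1 - x) := by
  obtain ⟨hx2, hx1⟩ := abs_le.mp h
  have h1 : (0:ℝ) < 1 - x := by linarith
  rw [Real.le_log_iff_exp_le h1]
  have hmul : Real.exp (-x - x^2) * Real.exp (x + x^2) = 1 := by
    rw [← Real.exp_add]; ring_nf; exact Real.exp_zero
  have hEpos := Real.exp_pos (-x - x^2)
  rcases le_or_gt 0 x with hx0 | hx0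
  · have ht : (0:ℝ) ≤ x + x^2 := by nlinarith
    have h2 := Real.quadratic_le_exp_of_nonneg ht
    have h3 : 1 ≤ (1 - x) * (1 + (x + x^2) + (x + x^2)^2 / 2) := by nlinarith
    nlinarith [mul_le_mul_of_nonneg_left h2 hEpos.le]
  · have h2 := Real.add_one_le_exp (x + x^2)
    have h3 : 1 ≤ (1 - x) * (x + x^2 + 1) := by nlinarith
    nlinarith [mul_le_mul_of_nonneg_left h2 hEpos.le]

set_option maxHeartbeats 1000000 in
/-- Multiplicative Weights lemma with additive and multiplicative guarantee:
for losses `ℓ^{(k)} ∈ [-σ, τ]^m̃` and the multiplicative weights update with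
learning rate `η = δ/(4 min{σ,τ})`, after `K ≥ 8στ log(m̃)/δ²` rounds the
average realized loss is bounded by `δ` plus `(1 + s·η)` times the average loss
of any fixed distribution `u`. -/
theorem multiplicative_weights {mt : ℕ}
    (σ τ δ : ℝ) (hσ : 0 < σ) (hτ : 0 < τ)
    (hδ0 : 0 < δ) (hδ : δ ≤ 2 * min σ τ)
    (η : ℝ) (hη : η = δ / (4 * min σ τ))
    (s : ℝ) (hs : s = if σ ≤ τ then 1 else -1)
    (K : ℕ) (hK : 8 * σ * τ * Real.log mt / δ ^ 2 ≤ K)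
    (ℓ : ℕ → Fin mt → ℝ) (hℓ : ∀ k < K, ∀ i, ℓ k i ∈ Set.Icc (-σ) τ)
    (Λ : ℕ → Fin mt → ℝ) (hΛ0 : Λ 0 = fun _ => 1)
    (hΛ : ∀ k, Λ (k + 1) = fun i => Λ k i * (1 - (η / max σ τ) * ℓ k i)) :
    ∀ u : Fin mt → ℝ, (∀ i, 0 ≤ u i) → (∑ i, u i = 1) →
      (1 / K) * ∑ k ∈ Finset.range K, ∑ i, ℓ k i * (Λ k i / ∑ i', |Λ k i'|)
        ≤ δ + ((1 + s * η) / K) * ∑ k ∈ Finset.range K, ∑ i, ℓ k i * u i := by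
  intro u hu0 hu1
  -- trivial cases
  rcases Nat.eq_zero_or_pos mt with hmt | hmt
  · subst hmt; simp at hu1
  rcases Nat.eq_zero_or_pos K with hK0 | hKpos
  · subst hK0; simp; linarith
  set Wm := min σ τ with hWm
  set Wp := max σ τ with hWp
  have hWm0 : 0 < Wm := lt_min hσ hτ
  have hWp0 : 0 < Wp := lt_of_lt_of_le hWm0 min_le_max
  have hη0 : 0 < η := by rw [hη]; positivity
  have hη2 : η ≤ 1/2 := by
    rw [hη, div_le_iff₀ (by positivity)]; linarith
  set ε := η / Wp with hε
  have hε0 : 0 < ε := div_pos hη0 hWp0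
  have hεℓ : ∀ k < K, ∀ i, |ε * ℓ k i| ≤ η := by
    intro k hk i
    obtain ⟨h1, h2⟩ := hℓ k hk i
    have hb : |ℓ k i| ≤ Wp := by
      rw [abs_le]
      exact ⟨by linarith [le_max_left σ τ], le_trans h2 (le_max_right σ τ)⟩
    rw [abs_mul, abs_of_pos hε0]
    calc ε * |ℓ k i| ≤ ε * Wp := by nlinarith
      _ = η := by rw [hε]; exact div_mul_cancel₀ η hWp0.ne'
  have hfac : ∀ k < K, ∀ i, 1/2 ≤ 1 - ε * ℓ k i := by
    intro k hk i
    have := (abs_le.mp (hεℓ k hk i)).2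
    linarith
  have hΛpos : ∀ k, k ≤ K → ∀ i, 0 < Λ k i := by
    intro k
    induction k with
    | zero => intro _ i; rw [hΛ0]; norm_num
    | succ n ih =>
      intro hk i
      have hn : n < K := hk
      have h1 := ih hn.le i
      have h2 := hfac n hn i
      simp only [hΛ n]
      nlinarith
  set Φ : ℕ → ℝ := fun k => ∑ i, Λ k i with hΦ
  have hne : (Finset.univ : Finset (Fin mt)).Nonempty :=
    Finset.univ_nonempty_iff.mpr (Fin.pos_iff_nonempty.mp hmt)
  have hΦpos : ∀ k, k ≤ K → 0 < Φ k := fun k hk =>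
    Finset.sum_pos (fun i _ => hΛpos k hk i) hne
  set Q : ℕ → ℝ := fun k => (∑ i, ℓ k i * Λ k i) / Φ k with hQ
  have hrec : ∀ k, Φ (k + 1) = Φ k - ε * ∑ i, ℓ k i * Λ k i := by
    intro k
    simp only [hΦ, hΛ k, Finset.mul_sum, ← Finset.sum_sub_distrib]
    exact Finset.sum_congr rfl fun i _ => by ring
  -- Step A: potential upper bound
  have hstepA : ∀ n, n ≤ K →
      Real.log (Φ n) ≤ Real.log (Φ 0) - ε * ∑ k ∈ Finset.range n, Q k := by
    intro n
    induction n with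
    | zero => intro _; simp
    | succ m ih =>
      intro hm
      have hmK : m < K := hm
      have h1 := ih hmK.le
      have hp0 := hΦpos m hmK.le
      have hp1 := hΦpos (m + 1) hm
      have hq : Φ (m + 1) / Φ m = 1 - ε * Q m := by
        rw [hrec m, hQ]
        field_simp
      have h3 : Real.log (Φ (m + 1) / Φ m) ≤ Φ (m + 1) / Φ m - 1 :=
        Real.log_le_sub_one_of_pos (div_pos hp1 hp0)
      rw [Real.log_div hp1.ne' hp0.ne', hq] at h3
      rw [Finset.sum_range_succ, mul_add]
      linarith
  -- product formula
  have hprod : ∀ n, n ≤ K → ∀ i,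
      Λ n i = ∏ k ∈ Finset.range n, (1 - ε * ℓ k i) := by
    intro n
    induction n with
    | zero => intro _ i; simp [hΛ0]
    | succ m ih =>
      intro hm i
      have hmK : m < K := hm
      simp only [hΛ m]
      rw [Finset.prod_range_succ, ih hmK.le i]
  -- per-term lower bound on log of factor
  have hterm : ∀ k < K, ∀ i,
      -(ε * (1 + s * η)) * ℓ k i - 2 * ε * η * Wm ≤ Real.log (1 - ε * ℓ k i) := by
    intro k hk i
    have h1 := log_one_sub_ge_aux (x := ε * ℓ k i) (le_trans (hεℓ k hk i) hη2)
    have ha : ε * |ℓ k i| ≤ η := by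
      have := hεℓ k hk i; rwa [abs_mul, abs_of_pos hε0] at this
    have h2 : (ε * ℓ k i)^2 ≤ ε * η * |ℓ k i| := by
      have hnn : 0 ≤ ε * |ℓ k i| := mul_nonneg hε0.le (abs_nonneg _)
      have key := mul_le_mul_of_nonneg_left ha hnn
      have hsq : ε^2 * |ℓ k i|^2 = ε^2 * (ℓ k i)^2 := by rw [sq_abs]
      nlinarith [key, hsq]
    have h3 : |ℓ k i| ≤ s * ℓ k i + 2 * Wm := by
      obtain ⟨hl1, hl2⟩ := hℓ k hk i
      rcases le_or_gt σ τ with hst | hst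
      · rw [hs, if_pos hst, hWm, min_eq_left hst]
        rcases abs_cases (ℓ k i) with ⟨he, _⟩ | ⟨he, _⟩ <;> rw [he] <;> linarith
      · rw [hs, if_neg (not_le.mpr hst), hWm, min_eq_right hst.le]
        rcases abs_cases (ℓ k i) with ⟨he, _⟩ | ⟨he, _⟩ <;> rw [he] <;> linarith
    have h4 := mul_le_mul_of_nonneg_left h3 (mul_nonneg hε0.le hη0.le)
    nlinarith
  -- lower bound on log Λ K i
  have hlogK : ∀ i,
      -(ε * (1 + s * η)) * (∑ k ∈ Finset.range K, ℓ k i) - 2 * ε * η * Wm * K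
        ≤ Real.log (Λ K i) := by
    intro i
    rw [hprod K le_rfl i,
      Real.log_prod (fun k hk => by
        have := hfac k (Finset.mem_range.mp hk) i; intro hzero; rw [hzero] at this; linarith)]
    calc -(ε * (1 + s * η)) * (∑ k ∈ Finset.range K, ℓ k i) - 2 * ε * η * Wm * K
        = ∑ k ∈ Finset.range K, (-(ε * (1 + s * η)) * ℓ k i - 2 * ε * η * Wm) := by
          rw [Finset.sum_sub_distrib, ← Finset.mul_sum, Finset.sum_const,
            Finset.card_range, nsmul_eq_mul]
          ring
      _ ≤ ∑ k ∈ Finset.range K, Real.log (1 - ε * ℓ k i) :=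
          Finset.sum_le_sum fun k hk => hterm k (Finset.mem_range.mp hk) i
  -- Jensen / weighted AM-GM
  have hjensen : ∑ i, u i * Real.log (Λ K i) ≤ Real.log (Φ K) := by
    have hgm := Real.geom_mean_le_arith_mean_weighted Finset.univ u (fun i => Λ K i)
      (fun i _ => hu0 i) hu1 (fun i _ => (hΛpos K le_rfl i).le)
    have hprodpos : 0 < ∏ i, Λ K i ^ u i :=
      Finset.prod_pos fun i _ => Real.rpow_pos_of_pos (hΛpos K le_rfl i) _
    have h1 : Real.log (∏ i, Λ K i ^ u i) = ∑ i, u i * Real.log (Λ K i) := by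
      rw [Real.log_prod (fun i _ => (Real.rpow_pos_of_pos (hΛpos K le_rfl i) _).ne')]
      exact Finset.sum_congr rfl fun i _ => Real.log_rpow (hΛpos K le_rfl i) _
    rw [← h1]
    apply Real.log_le_log hprodpos
    refine le_trans hgm (Finset.sum_le_sum fun i _ => ?_)
    have hΛi := hΛpos K le_rfl i
    have hui : u i ≤ 1 := by
      have := Finset.single_le_sum (fun j _ => hu0 j) (Finset.mem_univ i)
      exact hu1 ▸ this
    calc u i * Λ K i ≤ 1 * Λ K i := mul_le_mul_of_nonneg_right hui hΛi.le
      _ = Λ K i := one_mul _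
  -- combine
  have hΦ0 : Real.log (Φ 0) = Real.log mt := by
    simp [hΦ, hΛ0]
  set Su : ℝ := ∑ k ∈ Finset.range K, ∑ i, ℓ k i * u i with hSu
  have hswap : ∑ i, u i * (∑ k ∈ Finset.range K, ℓ k i) = Su := by
    rw [hSu]
    simp_rw [Finset.mul_sum]
    rw [Finset.sum_comm]
    exact Finset.sum_congr rfl fun k _ => Finset.sum_congr rfl fun i _ => mul_comm _ _
  have hweighted : -(ε * (1 + s * η)) * Su - 2 * ε * η * Wm * K
      ≤ ∑ i, u i * Real.log (Λ K i) := by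
    have e1 : ∑ i, u i * (-(ε * (1 + s * η)) * (∑ k ∈ Finset.range K, ℓ k i)
          - 2 * ε * η * Wm * K)
        = -(ε * (1 + s * η)) * (∑ i, u i * (∑ k ∈ Finset.range K, ℓ k i))
          - 2 * ε * η * Wm * K * (∑ i, u i) := by
      rw [Finset.mul_sum, Finset.mul_sum, ← Finset.sum_sub_distrib]
      exact Finset.sum_congr rfl fun i _ => by ring
    calc -(ε * (1 + s * η)) * Su - 2 * ε * η * Wm * K
        = ∑ i, u i * (-(ε * (1 + s * η)) * (∑ k ∈ Finset.range K, ℓ k i)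
            - 2 * ε * η * Wm * K) := by
          rw [e1, hswap, hu1]; ring
      _ ≤ ∑ i, u i * Real.log (Λ K i) :=
          Finset.sum_le_sum fun i _ => mul_le_mul_of_nonneg_left (hlogK i) (hu0 i)
  have hminmax : Wm * Wp = σ * τ := min_mul_max σ τ
  have hKR : (0:ℝ) < K := by exact_mod_cast hKpos
  have hlogmt : Real.log mt ≤ ε * ((δ/2) * K) := by
    have h1 : 8 * σ * τ * Real.log mt ≤ K * δ^2 := by
      rw [div_le_iff₀ (by positivity)] at hK; exact hK
    have h2 : ε * ((δ/2) * K) = δ^2 * K / (8 * (σ * τ)) := by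
      rw [hε, hη, ← hminmax]
      field_simp
      ring
    rw [h2, le_div_iff₀ (by positivity)]
    nlinarith
  have hδ2 : 2 * η * Wm = δ / 2 := by
    rw [hη]; field_simp; ring
  -- main inequality on sums
  have hmain : ∑ k ∈ Finset.range K, Q k ≤ δ * K + (1 + s * η) * Su := by
    have hA := hstepA K le_rfl
    rw [hΦ0] at hA
    have hcomb : -(ε * (1 + s * η)) * Su - 2 * ε * η * Wm * K
        ≤ Real.log mt - ε * ∑ k ∈ Finset.range K, Q k :=
      le_trans hweighted (le_trans hjensen hA)
    have h2εη : 2 * ε * η * Wm * K = ε * ((δ/2) * K) := by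
      have : 2 * ε * η * Wm * K = ε * (2 * η * Wm * K) := by ring
      rw [this, hδ2]
    have : ε * ∑ k ∈ Finset.range K, Q k ≤ ε * (δ * K + (1 + s * η) * Su) := by
      rw [h2εη] at hcomb
      nlinarith [hlogmt]
    exact le_of_mul_le_mul_left this hε0
  -- rewrite the goal
  have hgoal_eq : ∀ k ∈ Finset.range K,
      ∑ i, ℓ k i * (Λ k i / ∑ i', |Λ k i'|) = Q k := by
    intro k hk
    have hkK := Finset.mem_range.mp hk
    have habs : ∑ i', |Λ k i'| = Φ k :=
      Finset.sum_congr rfl fun i _ => abs_of_pos (hΛpos k hkK.le i)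
    rw [habs]; simp only [hQ]; rw [Finset.sum_div]
    exact Finset.sum_congr rfl fun i _ => (mul_div_assoc _ _ _).symm
  rw [Finset.sum_congr rfl hgoal_eq]
  calc (1 / (K:ℝ)) * ∑ k ∈ Finset.range K, Q k
      ≤ (1 / (K:ℝ)) * (δ * K + (1 + s * η) * Su) := by
        apply mul_le_mul_of_nonneg_left hmain (by positivity)
    _ = δ + ((1 + s * η) / K) * Su := by
        field_simp
end
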